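/- arXiv:2010.14062 — 11 statements merged into one kernel-verified Lean document; each statement's English description precedes it below -/
import Mathlib

section
/- There exists a complex polynomial Q of degree exactly 2·N + Σ_c ℓ_c, with leading coefficient (−1)^N · ∏_c (a_c)^{ℓ_c}, such that for every z ∈ ℂ with p_c(a_c·z) ≠ 0 for all channels c one has det(A⁻¹(z)) · ∏_c p_c(a_c·z) = Q(z). (Hence, per sheet of the wavenumber–energy mapping, the radioactive problem det A⁻¹(z) = 0 has exactly 2·N + Σ_c ℓ_c solutions in wavenumber space, counted with multiplicity.) -/
open Matrix Polynomial Finset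

variable {R : Type*} [CommRing R]

lemma coeff_prod_of_natDegree_le' {ι : Type*} (t : Finset ι) (f : ι → R[X]) (d : ι → ℕ)
    (h : ∀ i ∈ t, (f i).natDegree ≤ d i) :
    (∏ i ∈ t, f i).coeff (∑ i ∈ t, d i) = ∏ i ∈ t, (f i).coeff (d i) := by
  classical
  induction t using Finset.cons_induction with
  | empty => simp
  | cons a t hat ih =>
    rw [Finset.prod_cons, Finset.prod_cons, Finset.sum_cons,
      Polynomial.coeff_mul_add_eq_of_natDegree_le (h a (Finset.mem_cons_self _ _))
        (Polynomial.natDegree_prod_le _ _ |>.trans (Finset.sum_le_sum fun i hi => h i (Finset.mem_cons_of_mem hi))),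
      ih fun i hi => h i (Finset.mem_cons_of_mem hi)]

lemma det_coeff_weighted {n : Type*} [DecidableEq n] [Fintype n]
    (M : Matrix n n R[X]) (r s : n → ℕ)
    (h : ∀ i j, (M i j).natDegree ≤ r i + s j) :
    (M.det).natDegree ≤ (∑ i, r i) + ∑ i, s i ∧
    (M.det).coeff ((∑ i, r i) + ∑ i, s i) =
      (Matrix.of fun i j => (M i j).coeff (r i + s j)).det := by
  classical
  have key : ∀ σ : Equiv.Perm n, ∑ i, (r (σ i) + s i) = (∑ i, r i) + ∑ i, s i := by
    intro σ
    rw [Finset.sum_add_distrib, Equiv.sum_comp σ r]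
  constructor
  · rw [Matrix.det_apply']
    refine Polynomial.natDegree_sum_le_of_forall_le _ _ fun σ _ => ?_
    refine Polynomial.natDegree_mul_le.trans ?_
    have h1 : ((Equiv.Perm.sign σ : ℤ) : R[X]).natDegree = 0 := Polynomial.natDegree_intCast _
    rw [h1, zero_add]
    refine (Polynomial.natDegree_prod_le _ _).trans ?_
    calc ∑ i, (M (σ i) i).natDegree ≤ ∑ i, (r (σ i) + s i) :=
          Finset.sum_le_sum fun i _ => h _ _
      _ = _ := key σ
  · rw [Matrix.det_apply', Matrix.det_apply', Polynomial.finset_sum_coeff]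
    refine Finset.sum_congr rfl fun σ _ => ?_
    have : ((Equiv.Perm.sign σ : ℤ) : R[X]) = Polynomial.C ((Equiv.Perm.sign σ : ℤ) : R) := by
      simp
    rw [this, Polynomial.coeff_C_mul, ← key σ,
      coeff_prod_of_natDegree_le' _ _ _ fun i _ => h _ _]
    simp

set_option maxHeartbeats 1000000 in
/-- For R-matrix theory with `N` levels and `m` zero-threshold neutral
channels, the level determinant times the product of the outgoing-wavefunction polynomials
is a polynomial in the wavenumber `z` of degree exactly `2N + Σ_c ℓ_c`, with leading
coefficient `(−1)^N · ∏_c a_c^{ℓ_c}`: hence the radioactive problem has exactly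
`2N + Σ_c ℓ_c` solutions in wavenumber space (with multiplicity). -/
theorem stmt0 (N m : ℕ) (e : Fin N → ℝ) (γ : Matrix (Fin N) (Fin m) ℝ)
    (B : Fin m → ℝ) (a : Fin m → ℝ) (ha : ∀ c, 0 < a c)
    (ℓ : Fin m → ℕ) (p : Fin m → Polynomial ℂ)
    (hmonic : ∀ c, (p c).Monic) (hdeg : ∀ c, (p c).natDegree = ℓ c)
    (L : Fin m → ℂ → ℂ)
    (hL : ∀ c ρ, (p c).eval ρ ≠ 0 →
      L c ρ = Complex.I * ρ - (ℓ c : ℂ) + ρ * (Polynomial.derivative (p c)).eval ρ / (p c).eval ρ)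
    (Ainv : ℂ → Matrix (Fin N) (Fin N) ℂ)
    (hAinv : ∀ z, Ainv z =
      Matrix.diagonal (fun lam => (e lam : ℂ)) - z ^ 2 • (1 : Matrix (Fin N) (Fin N) ℂ)
        - (γ.map ((↑) : ℝ → ℂ)) *
            Matrix.diagonal (fun c => L c ((a c : ℂ) * z) - (B c : ℂ)) *
            (γ.map ((↑) : ℝ → ℂ))ᵀ) :
    ∃ Q : Polynomial ℂ,
      Q.degree = ((2 * N + ∑ c, ℓ c : ℕ) : WithBot ℕ) ∧
      Q.leadingCoeff = (-1 : ℂ) ^ N * ∏ c, (a c : ℂ) ^ ℓ c ∧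
      ∀ z : ℂ, (∀ c, (p c).eval ((a c : ℂ) * z) ≠ 0) →
        (Ainv z).det * ∏ c, (p c).eval ((a c : ℂ) * z) = Q.eval z := by
  classical
  have haC : ∀ c, ((a c : ℂ)) ≠ 0 := fun c => by
    exact_mod_cast (ha c).ne'
  set Pc : Fin m → ℂ[X] := fun c => (p c).comp (Polynomial.C ((a c : ℂ)) * X) with hPcdef
  set q : Fin m → ℂ[X] := fun c =>
    (Polynomial.C (Complex.I * (a c : ℂ)) * X - Polynomial.C ((ℓ c : ℂ) + (B c : ℂ))) * Pc c
      + Polynomial.C ((a c : ℂ)) * X *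
        ((Polynomial.derivative (p c)).comp (Polynomial.C ((a c : ℂ)) * X)) with hqdef
  set T : Matrix (Fin N ⊕ Fin m) (Fin N ⊕ Fin m) ℂ[X] := Matrix.fromBlocks
    (Matrix.diagonal (fun lam => Polynomial.C ((e lam : ℂ))) - (X : ℂ[X]) ^ 2 • 1)
    (Matrix.of fun lam c => Polynomial.C ((γ lam c : ℂ)) * q c)
    (Matrix.of fun c lam => Polynomial.C ((γ lam c : ℂ)))
    (Matrix.diagonal Pc) with hTdef
  have hXa : ∀ c, (Polynomial.C ((a c : ℂ)) * X).natDegree = 1 := fun c =>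
    Polynomial.natDegree_C_mul_X _ (haC c)
  have hPcdeg : ∀ c, (Pc c).natDegree = ℓ c := by
    intro c
    rw [hPcdef]
    rw [Polynomial.natDegree_comp, hXa c, hdeg c, mul_one]
  have hPclead : ∀ c, (Pc c).coeff (ℓ c) = (a c : ℂ) ^ ℓ c := by
    intro c
    have h1 : (Pc c).coeff (ℓ c) = (Pc c).leadingCoeff := by
      rw [Polynomial.leadingCoeff, hPcdeg c]
    rw [h1, hPcdef]
    rw [Polynomial.leadingCoeff_comp (by rw [hXa c]; norm_num), (hmonic c).leadingCoeff,
      one_mul, Polynomial.leadingCoeff_C_mul_X, hdeg c]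
  have hCX : ∀ k : ℂ, (Polynomial.C k * X).natDegree ≤ 1 := fun k =>
    Polynomial.natDegree_mul_le.trans (by simp)
  have hqdeg : ∀ c, (q c).natDegree ≤ ℓ c + 1 := by
    intro c
    rw [hqdef]
    refine Polynomial.natDegree_add_le_of_degree_le ?_ ?_
    · refine Polynomial.natDegree_mul_le.trans ?_
      have h1 : (Polynomial.C (Complex.I * (a c : ℂ)) * X -
          Polynomial.C ((ℓ c : ℂ) + (B c : ℂ))).natDegree ≤ 1 := by
        refine (Polynomial.natDegree_sub_le _ _).trans ?_
        simp only [Polynomial.natDegree_C, max_le_iff]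
        exact ⟨hCX _, Nat.zero_le _⟩
      have := hPcdeg c
      omega
    · refine Polynomial.natDegree_mul_le.trans ?_
      have h1 : ((Polynomial.derivative (p c)).comp
          (Polynomial.C ((a c : ℂ)) * X)).natDegree ≤ ℓ c - 1 := by
        rw [Polynomial.natDegree_comp, hXa c, mul_one]
        exact (Polynomial.natDegree_derivative_le _).trans (by rw [hdeg c])
      have h2 := hCX ((a c : ℂ))
      omega
  -- weights
  set r : Fin N ⊕ Fin m → ℕ := Sum.elim (fun _ => 2) (fun _ => 0) with hrdef
  set s : Fin N ⊕ Fin m → ℕ := Sum.elim (fun _ => 0) ℓ with hsdef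
  have hbound : ∀ i j, (T i j).natDegree ≤ r i + s j := by
    rintro (lam | c) (mu | c')
    · show ((Matrix.diagonal (fun lam => Polynomial.C ((e lam : ℂ))) - (X : ℂ[X]) ^ 2 • 1) lam mu).natDegree ≤ 2 + 0
      rcases eq_or_ne lam mu with h | h
      · subst h
        simp only [Matrix.sub_apply, Matrix.diagonal_apply_eq, Matrix.smul_apply,
          Matrix.one_apply_eq, smul_eq_mul, mul_one]
        refine (Polynomial.natDegree_sub_le _ _).trans ?_
        simp [Polynomial.natDegree_C, Polynomial.natDegree_X_pow]
      · simp [Matrix.diagonal_apply_ne _ h, Matrix.one_apply_ne h]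
    · show ((Polynomial.C ((γ lam c' : ℂ))) * q c').natDegree ≤ 2 + ℓ c'
      refine Polynomial.natDegree_mul_le.trans ?_
      have := hqdeg c'
      have h3 : (Polynomial.C ((γ lam c' : ℂ))).natDegree = 0 := Polynomial.natDegree_C _
      omega
    · show ((Polynomial.C ((γ mu c : ℂ)))).natDegree ≤ 0 + 0
      simp
    · show ((Matrix.diagonal Pc) c c').natDegree ≤ 0 + ℓ c'
      rcases eq_or_ne c c' with h | h
      · subst h
        simp [Matrix.diagonal_apply_eq, hPcdeg c]
      · simp [Matrix.diagonal_apply_ne _ h]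
  have hsum_r : ∑ i, r i = 2 * N := by
    rw [hrdef, Fintype.sum_sum_type]
    simp [mul_comm]
  have hsum_s : ∑ i, s i = ∑ c, ℓ c := by
    rw [hsdef, Fintype.sum_sum_type]
    simp
  obtain ⟨hdegle, hcoeff⟩ := det_coeff_weighted T r s hbound
  rw [hsum_r, hsum_s] at hdegle hcoeff
  -- identify the top-coefficient matrix
  have htop : (Matrix.of fun i j => (T i j).coeff (r i + s j)) =
      Matrix.fromBlocks (-1 : Matrix (Fin N) (Fin N) ℂ) 0
        (Matrix.of fun c mu => ((γ mu c : ℂ))) (Matrix.diagonal fun c => (a c : ℂ) ^ ℓ c) := by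
    ext i j
    rcases i with lam | c <;> rcases j with mu | c'
    all_goals rw [Matrix.of_apply]
    · show ((Matrix.diagonal (fun lam => Polynomial.C ((e lam : ℂ))) - (X : ℂ[X]) ^ 2 • 1) lam mu).coeff (2 + 0) = _
      rcases eq_or_ne lam mu with h | h
      · subst h
        simp [Matrix.one_apply_eq, Polynomial.coeff_C]
      · simp [Matrix.diagonal_apply_ne _ h, Matrix.one_apply_ne h, h]
    · show ((Polynomial.C ((γ lam c' : ℂ))) * q c').coeff (2 + ℓ c') = _
      have : ((Polynomial.C ((γ lam c' : ℂ))) * q c').natDegree < 2 + ℓ c' := by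
        refine lt_of_le_of_lt (Polynomial.natDegree_mul_le.trans ?_) (by omega : ℓ c' + 1 < 2 + ℓ c')
        have := hqdeg c'
        have h3 : (Polynomial.C ((γ lam c' : ℂ))).natDegree = 0 := Polynomial.natDegree_C _
        omega
      simp [Polynomial.coeff_eq_zero_of_natDegree_lt this]
    · show ((Polynomial.C ((γ mu c : ℂ)))).coeff (0 + 0) = _
      simp
    · show ((Matrix.diagonal Pc) c c').coeff (0 + ℓ c') = _
      rcases eq_or_ne c c' with h | h
      · subst h
        simp [hPclead c]
      · simp [Matrix.diagonal_apply_ne _ h, Matrix.diagonal_apply_ne _ h]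
  have hdet_top : (Matrix.of fun i j => (T i j).coeff (r i + s j)).det =
      (-1 : ℂ) ^ N * ∏ c, (a c : ℂ) ^ ℓ c := by
    rw [htop, Matrix.det_fromBlocks_zero₁₂, Matrix.det_diagonal]
    congr 1
    rw [show (-1 : Matrix (Fin N) (Fin N) ℂ) = -(1 : Matrix (Fin N) (Fin N) ℂ) from rfl,
      Matrix.det_neg]
    simp
  have hcoeff' : T.det.coeff (2 * N + ∑ c, ℓ c) = (-1 : ℂ) ^ N * ∏ c, (a c : ℂ) ^ ℓ c := by
    rw [hcoeff, hdet_top]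
  have hne : T.det.coeff (2 * N + ∑ c, ℓ c) ≠ 0 := by
    rw [hcoeff']
    refine mul_ne_zero (by simp) (Finset.prod_ne_zero_iff.mpr fun c _ => pow_ne_zero _ (haC c))
  have hnatdeg : T.det.natDegree = 2 * N + ∑ c, ℓ c :=
    le_antisymm hdegle (Polynomial.le_natDegree_of_ne_zero hne)
  have hQne : T.det ≠ 0 := fun h => hne (by simp [h])
  refine ⟨T.det, ?_, ?_, ?_⟩
  · rw [Polynomial.degree_eq_natDegree hQne, hnatdeg]
  · rw [Polynomial.leadingCoeff, hnatdeg, hcoeff']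
  · intro z hz
    have hmap : T.map (Polynomial.evalRingHom z) = Matrix.fromBlocks
        (Matrix.diagonal (fun lam => (e lam : ℂ)) - z ^ 2 • 1)
        (Matrix.of fun lam c => (γ lam c : ℂ) * (q c).eval z)
        (Matrix.of fun c lam => (γ lam c : ℂ))
        (Matrix.diagonal fun c => (p c).eval ((a c : ℂ) * z)) := by
      ext i j
      rcases i with lam | c <;> rcases j with mu | c'
      · rcases eq_or_ne lam mu with h | h <;>
          simp [hTdef, Matrix.map_apply, h, Matrix.one_apply, Matrix.diagonal_apply]
      · simp [hTdef, Matrix.map_apply]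
      · simp [hTdef, Matrix.map_apply]
      · rcases eq_or_ne c c' with h | h <;>
          simp [hTdef, Matrix.map_apply, Matrix.diagonal_apply, h, hPcdef,
            Polynomial.eval_comp]
    set D' := Matrix.diagonal (fun c => (p c).eval ((a c : ℂ) * z)) with hD'
    haveI : Invertible D' := Matrix.invertibleOfIsUnitDet _ (by
      rw [hD', Matrix.det_diagonal]
      exact (Finset.prod_ne_zero_iff.mpr fun c _ => hz c).isUnit)
    have hInv : (⅟D' : Matrix (Fin m) (Fin m) ℂ) =
        Matrix.diagonal fun c => ((p c).eval ((a c : ℂ) * z))⁻¹ := by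
      rw [Matrix.invOf_eq_nonsing_inv]
      refine Matrix.inv_eq_right_inv ?_
      rw [hD', Matrix.diagonal_mul_diagonal]
      have h1 : (fun c => (p c).eval ((a c : ℂ) * z) * ((p c).eval ((a c : ℂ) * z))⁻¹)
          = fun _ => (1 : ℂ) := funext fun c => mul_inv_cancel₀ (hz c)
      rw [h1, Matrix.diagonal_one]
    have hdet2 : (T.map (Polynomial.evalRingHom z)).det = D'.det * (Ainv z).det := by
      rw [hmap, Matrix.det_fromBlocks₂₂]
      congr 1
      rw [hAinv z]
      congr 1
      rw [hInv]
      ext lam mu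
      simp only [Matrix.sub_apply, Matrix.mul_apply, Matrix.diagonal_apply, Matrix.of_apply,
        Matrix.map_apply, Matrix.transpose_apply, ite_mul, mul_ite, zero_mul, mul_zero,
        Finset.sum_ite_eq, Finset.sum_ite_eq', Finset.mem_univ, if_true]
      congr 1
      refine Finset.sum_congr rfl fun c _ => ?_
      have hq : (q c).eval z = (Complex.I * (a c : ℂ) * z - ((ℓ c : ℂ) + (B c : ℂ))) *
            (p c).eval ((a c : ℂ) * z)
          + (a c : ℂ) * z * (Polynomial.derivative (p c)).eval ((a c : ℂ) * z) := by
        simp [hqdef, hPcdef, Polynomial.eval_comp]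
      rw [hq, hL c _ (hz c)]
      field_simp [hz c]
      ring
    calc (Ainv z).det * ∏ c, (p c).eval ((a c : ℂ) * z)
        = D'.det * (Ainv z).det := by rw [hD', Matrix.det_diagonal]; ring
      _ = (T.map (Polynomial.evalRingHom z)).det := hdet2.symm
      _ = Polynomial.eval z T.det := (RingHom.map_det (Polynomial.evalRingHom z) T).symm
end

section
/- For every a ∈ J, the derivative of the scattering function with respect to the channel radius satisfies U'(a) = (2ik/O(ka)²) · ( a·R_L'(a) + (1 − 2·L(ka))·R_L(a) − 1 ). In particular, U is constant on J (invariance of the scattering matrix under change of channel radius) if and only if the Kapur–Peierls function satisfies the differential equation a·R_L'(a) + (1 − 2·L(ka))·R_L(a) − 1 = 0 on J. -/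
open Topology

/-- Single-channel R-matrix scattering: the derivative of the scattering
function with respect to the channel radius is
`U'(a) = (2ik/O(ka)²)·(a·R_L'(a) + (1 − 2L(ka))·R_L(a) − 1)`; in particular `U` is
constant on `J` iff the Kapur–Peierls function satisfies
`a·R_L'(a) + (1 − 2L(ka))·R_L(a) − 1 = 0` on `J`. -/
theorem stmt1 (k : ℂ) (hk : k ≠ 0) (O Iw : ℂ → ℂ)
    (hO : Differentiable ℂ O) (hIw : Differentiable ℂ Iw)
    (L : ℂ → ℂ) (hL : ∀ ρ, O ρ ≠ 0 → L ρ = ρ * deriv O ρ / O ρ)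
    (J : Set ℝ) (hJo : IsOpen J) (hJc : J.OrdConnected) (hJpos : J ⊆ Set.Ioi 0)
    (hWr : ∀ a ∈ J, deriv O (k * (a : ℂ)) * Iw (k * (a : ℂ))
      - deriv Iw (k * (a : ℂ)) * O (k * (a : ℂ)) = 2 * Complex.I)
    (hOne : ∀ a ∈ J, O (k * (a : ℂ)) ≠ 0)
    (RL : ℝ → ℂ) (hRL : ∀ a ∈ J, DifferentiableAt ℝ RL a)
    (U : ℝ → ℂ)
    (hU : ∀ a : ℝ, U a = Iw (k * (a : ℂ)) / O (k * (a : ℂ))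
      + 2 * Complex.I * (k * (a : ℂ)) * RL a / (O (k * (a : ℂ))) ^ 2) :
    (∀ a ∈ J, deriv U a =
        2 * Complex.I * k / (O (k * (a : ℂ))) ^ 2 *
          ((a : ℂ) * deriv RL a + (1 - 2 * L (k * (a : ℂ))) * RL a - 1)) ∧
    ((∀ a ∈ J, ∀ b ∈ J, U a = U b) ↔
      ∀ a ∈ J, (a : ℂ) * deriv RL a + (1 - 2 * L (k * (a : ℂ))) * RL a - 1 = 0) := by
  have hUf : U = fun a : ℝ => Iw (k * (a : ℂ)) / O (k * (a : ℂ))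
      + 2 * Complex.I * (k * (a : ℂ)) * RL a / (O (k * (a : ℂ))) ^ 2 := funext hU
  have key : ∀ a ∈ J, HasDerivAt U
      (2 * Complex.I * k / (O (k * (a : ℂ))) ^ 2 *
        ((a : ℂ) * deriv RL a + (1 - 2 * L (k * (a : ℂ))) * RL a - 1)) a := by
    intro a ha
    have hOa := hOne a ha
    have hmul : HasDerivAt (fun z : ℂ => k * z) k (a : ℂ) := by
      simpa using (hasDerivAt_id (a : ℂ)).const_mul k
    have hOc : HasDerivAt (fun b : ℝ => O (k * (b : ℂ))) (deriv O (k * (a : ℂ)) * k) a :=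
      (((hO _).hasDerivAt.comp _ hmul)).comp_ofReal
    have hIc : HasDerivAt (fun b : ℝ => Iw (k * (b : ℂ))) (deriv Iw (k * (a : ℂ)) * k) a :=
      (((hIw _).hasDerivAt.comp _ hmul)).comp_ofReal
    have hid : HasDerivAt (fun b : ℝ => (b : ℂ)) 1 a :=
      (hasDerivAt_id (a : ℂ)).comp_ofReal
    have hRa : HasDerivAt RL (deriv RL a) a := (hRL a ha).hasDerivAt
    have h1 := hIc.div hOc hOa
    have hnum : HasDerivAt (fun b : ℝ => 2 * Complex.I * (k * (b : ℂ)) * RL b)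
        ((2 * Complex.I * (k * 1)) * RL a + (2 * Complex.I * (k * (a : ℂ))) * deriv RL a) a :=
      ((hid.const_mul k).const_mul (2 * Complex.I)).mul hRa
    have hden : HasDerivAt (fun b : ℝ => (O (k * (b : ℂ))) ^ 2)
        (deriv O (k * (a : ℂ)) * k * O (k * (a : ℂ))
          + O (k * (a : ℂ)) * (deriv O (k * (a : ℂ)) * k)) a := by
      simpa [pow_two, Pi.mul_def] using hOc.mul hOc
    have h2 := hnum.div hden (pow_ne_zero 2 hOa)
    have hsum := h1.add h2
    simp only [Pi.div_def, Pi.add_def] at hsum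
    rw [← hUf] at hsum
    refine hsum.congr_deriv (Eq.symm ?_)
    rw [hL _ hOa]
    have W := hWr a ha
    field_simp
    linear_combination O (k * (a : ℂ)) * W
  refine ⟨fun a ha => (key a ha).deriv, ?_, ?_⟩
  · intro hconst a ha
    have hfac : 2 * Complex.I * k / (O (k * (a : ℂ))) ^ 2 ≠ 0 := by
      apply div_ne_zero _ (pow_ne_zero 2 (hOne a ha))
      simp [hk, Complex.I_ne_zero]
    have hloc : U =ᶠ[𝓝 a] fun _ => U a :=
      Filter.eventuallyEq_of_mem (hJo.mem_nhds ha) fun b hb => hconst b hb a ha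
    have h0 : deriv U a = 0 := by rw [hloc.deriv_eq, deriv_const]
    rw [(key a ha).deriv] at h0
    exact (mul_eq_zero.1 h0).resolve_left hfac
  · intro h0 a ha b hb
    have hconv : Convex ℝ J := convex_iff_ordConnected.mpr hJc
    refine hconv.is_const_of_fderivWithin_eq_zero (𝕜 := ℝ)
      (fun x hx => ((key x hx).differentiableAt).differentiableWithinAt) ?_ ha hb
    intro x hx
    have hd : HasDerivAt U 0 x := by
      have := key x hx
      rwa [h0 x hx, mul_zero] at this
    rw [fderivWithin_eq_fderiv (hJo.uniqueDiffWithinAt hx) hd.differentiableAt,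
      hd.hasFDerivAt.fderiv]
    ext
    simp
end

section
/- If r satisfies the differential equation a·r'(a) + (1/2 − L(ka))·r(a) = 0 for every a ∈ J, then the radioactive width transforms under a change of channel radius a₀ → a according to r(a)·O(k·a₀)·√a = r(a₀)·O(k·a)·√a₀ for every a ∈ J; equivalently r(a) = r(a₀)·√(a₀/a)·O(ka)/O(ka₀). -/
open Topology

/-- If the radioactive width `r` satisfies the differential equation
`a·r'(a) + (1/2 − L(ka))·r(a) = 0` on the interval `J` of channel radii, then it
transforms under a change of channel radius `a₀ → a` according to
`r(a)·O(k·a₀)·√a = r(a₀)·O(k·a)·√a₀`, i.e. `r(a) = r(a₀)·√(a₀/a)·O(ka)/O(ka₀)`. -/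
theorem stmt2 (k : ℂ) (O : ℂ → ℂ) (hO : Differentiable ℂ O)
    (L : ℂ → ℂ) (hL : ∀ ρ, O ρ ≠ 0 → L ρ = ρ * deriv O ρ / O ρ)
    (J : Set ℝ) (hJc : J.OrdConnected) (hJpos : J ⊆ Set.Ioi 0)
    (a₀ : ℝ) (ha₀ : a₀ ∈ J)
    (hOne : ∀ a ∈ J, O (k * (a : ℂ)) ≠ 0)
    (r : ℝ → ℂ) (hr : ∀ a ∈ J, DifferentiableAt ℝ r a)
    (hode : ∀ a ∈ J, (a : ℂ) * deriv r a + (1 / 2 - L (k * (a : ℂ))) * r a = 0) :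
    ∀ a ∈ J, r a * O (k * (a₀ : ℂ)) * (Real.sqrt a : ℂ) =
      r a₀ * O (k * (a : ℂ)) * (Real.sqrt a₀ : ℂ) := by
  set F : ℝ → ℂ := fun a => r a * (Real.sqrt a : ℂ) * (O (k * (a : ℂ)))⁻¹ with hF
  have key : ∀ a ∈ J, HasDerivAt F 0 a := by
    intro a ha
    have hapos : (0:ℝ) < a := hJpos ha
    have hOa : O (k * (a : ℂ)) ≠ 0 := hOne a ha
    -- derivative of O(k·)
    have h1 : HasDerivAt (fun z : ℂ => O (k * z)) (deriv O (k * a) * k) (a : ℂ) := by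
      simpa [Function.comp_def] using (hO (k * a)).hasDerivAt.comp (a : ℂ) ((hasDerivAt_id (a : ℂ)).const_mul k)
    have h2 : HasDerivAt (fun t : ℝ => O (k * (t : ℂ))) (deriv O (k * a) * k) a :=
      h1.comp_ofReal
    have h3 : HasDerivAt (fun t : ℝ => (O (k * (t : ℂ)))⁻¹)
        (-(deriv O (k * a) * k) / (O (k * a)) ^ 2) a := (h1.inv hOa).comp_ofReal
    -- sqrt derivative
    have hs : HasDerivAt (fun t : ℝ => ((Real.sqrt t : ℝ) : ℂ))
        ((1 / (2 * Real.sqrt a) : ℝ) : ℂ) a :=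
      (Real.hasDerivAt_sqrt (ne_of_gt hapos)).ofReal_comp
    have hrd : HasDerivAt r (deriv r a) a := (hr a ha).hasDerivAt
    have hprod := ((hrd.mul hs).mul h3)
    have hsq : (Real.sqrt a : ℂ) * (Real.sqrt a : ℂ) = (a : ℂ) := by
      rw [← Complex.ofReal_mul, Real.mul_self_sqrt hapos.le]
    have hsne : (Real.sqrt a : ℂ) ≠ 0 := by
      simp [Real.sqrt_eq_zero', not_le, hapos, ne_of_gt hapos]
    have hane : (a : ℂ) ≠ 0 := by exact_mod_cast ne_of_gt hapos
    have hodea := hode a ha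
    rw [hL _ hOa] at hodea
    have h0 : (deriv r a * ↑(Real.sqrt a) + r a * ↑(1 / (2 * Real.sqrt a))) *
        (O (k * ↑a))⁻¹ + r a * ↑(Real.sqrt a) * (-(deriv O (k * ↑a) * k) / O (k * ↑a) ^ 2) = 0 := by
      have hne : (2 : ℂ) * ↑(Real.sqrt a) * ↑a * O (k * ↑a) ^ 2 ≠ 0 := by
        apply mul_ne_zero (mul_ne_zero (mul_ne_zero two_ne_zero hsne) hane)
        exact pow_ne_zero 2 hOa
      have h' : ((deriv r a * ↑(Real.sqrt a) + r a * ↑(1 / (2 * Real.sqrt a))) *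
          (O (k * ↑a))⁻¹ + r a * ↑(Real.sqrt a) * (-(deriv O (k * ↑a) * k) / O (k * ↑a) ^ 2)) *
          ((2 : ℂ) * ↑(Real.sqrt a) * ↑a * O (k * ↑a) ^ 2) = 0 := by
        have hode2 : (a:ℂ) * deriv r a * O (k*↑a) + (O (k*↑a)/2 - k*↑a*deriv O (k*↑a)) * r a = 0 := by
          have e : k*↑a*deriv O (k*↑a)/O (k*↑a) * O (k*↑a) = k*↑a*deriv O (k*↑a) := div_mul_cancel₀ _ hOa
          linear_combination O (k*↑a) * hodea + r a * e
        push_cast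
        field_simp
        linear_combination (2*(a:ℂ)) * hode2 +
          (2*(a:ℂ)*deriv r a * O (k*↑a) - 2*(a:ℂ)*k*deriv O (k*↑a)*r a) * hsq
      exact (mul_eq_zero.mp h').resolve_right hne
    exact h0 ▸ hprod
  intro a ha
  have hsub : Set.uIcc a₀ a ⊆ J := hJc.uIcc_subset ha₀ ha
  have hconst : F a = F a₀ := by
    have hcont : ContinuousOn F (Set.uIcc a₀ a) := fun x hx =>
      ((key x (hsub hx)).continuousAt).continuousWithinAt
    rcases le_total a₀ a with h | h
    · have := constant_of_has_deriv_right_zero (by rwa [Set.uIcc_of_le h] at hcont)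
        (fun x hx => (key x (hsub (by rw [Set.uIcc_of_le h]; exact Set.Ico_subset_Icc_self hx))).hasDerivWithinAt)
      have h1 := this a ⟨h, le_rfl⟩
      have h2 := this a₀ ⟨le_rfl, h⟩
      rw [h1, h2]
    · have := constant_of_has_deriv_right_zero (by rwa [Set.uIcc_of_ge h] at hcont)
        (fun x hx => (key x (hsub (by rw [Set.uIcc_of_ge h]; exact Set.Ico_subset_Icc_self hx))).hasDerivWithinAt)
      have h1 := this a ⟨le_rfl, h⟩
      have h2 := this a₀ ⟨h, le_rfl⟩
      rw [h1, h2]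
  have hOa : O (k * (a : ℂ)) ≠ 0 := hOne a ha
  have hOa0 : O (k * (a₀ : ℂ)) ≠ 0 := hOne a₀ ha₀
  simp only [hF] at hconst
  field_simp at hconst
  linear_combination hconst
end

section
/- If r satisfies a·r'(a) + (1/2 − L(ka))·r(a) = 0 for every a ∈ J, then for every a ∈ J the radioactive width transforms by the elemental product expansion: r(a)·√a·a^ℓ·e^{−ika}·∏_{n=1}^{ℓ}(k·a₀ − ω_n) = r(a₀)·√a₀·a₀^ℓ·e^{−ik·a₀}·∏_{n=1}^{ℓ}(k·a − ω_n); equivalently r(a)/r(a₀) = √(a₀/a)·(a₀/a)^ℓ·e^{ik(a−a₀)}·∏_{n=1}^{ℓ} (ka − ω_n)/(ka₀ − ω_n). -/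
open Topology

/-- Neutral-particle channel of angular momentum `ℓ`, with outgoing
wavefunction `O(ρ) = e^{iρ}·∏_{n}(ρ − ω_n)·ρ^{−ℓ}`. If the radioactive width `r`
satisfies `a·r'(a) + (1/2 − L(ka))·r(a) = 0` on `J`, then it transforms under a change
of channel radius by the elemental product expansion
`r(a)/r(a₀) = √(a₀/a)·(a₀/a)^ℓ·e^{ik(a−a₀)}·∏_n (ka − ω_n)/(ka₀ − ω_n)`. -/
theorem stmt3 (ℓ : ℕ) (ω : Fin ℓ → ℂ) (k : ℂ) (O : ℂ → ℂ)
    (hO : ∀ ρ : ℂ, O ρ = Complex.exp (Complex.I * ρ) * (∏ n, (ρ - ω n)) / ρ ^ ℓ)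
    (L : ℂ → ℂ) (hL : ∀ ρ, O ρ ≠ 0 → L ρ = ρ * deriv O ρ / O ρ)
    (J : Set ℝ) (hJc : J.OrdConnected) (hJpos : J ⊆ Set.Ioi 0)
    (a₀ : ℝ) (ha₀ : a₀ ∈ J)
    (hne : ∀ a ∈ J, k * (a : ℂ) ≠ 0 ∧ ∀ n, k * (a : ℂ) ≠ ω n)
    (r : ℝ → ℂ) (hr : ∀ a ∈ J, DifferentiableAt ℝ r a)
    (hode : ∀ a ∈ J, (a : ℂ) * deriv r a + (1 / 2 - L (k * (a : ℂ))) * r a = 0) :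
    ∀ a ∈ J,
      r a * (Real.sqrt a : ℂ) * (a : ℂ) ^ ℓ * Complex.exp (-(Complex.I * k * (a : ℂ))) *
          ∏ n, (k * (a₀ : ℂ) - ω n) =
        r a₀ * (Real.sqrt a₀ : ℂ) * (a₀ : ℂ) ^ ℓ * Complex.exp (-(Complex.I * k * (a₀ : ℂ))) *
          ∏ n, (k * (a : ℂ) - ω n) := by
  classical
  set F : ℝ → ℂ := fun y =>
    r y * (Real.sqrt y : ℂ) * (y : ℂ) ^ ℓ * Complex.exp (-(Complex.I * k * (y : ℂ))) /
      ∏ n, (k * (y : ℂ) - ω n) with hFdef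
  have hPne : ∀ y ∈ J, (∏ n, (k * (y : ℂ) - ω n)) ≠ 0 := by
    intro y hy
    exact Finset.prod_ne_zero_iff.2 fun n _ => sub_ne_zero.2 ((hne y hy).2 n)
  have key : ∀ x ∈ J, HasDerivAt F 0 x := by
    intro x hx
    have hxpos : (0:ℝ) < x := hJpos hx
    have hx0 : (x:ℝ) ≠ 0 := ne_of_gt hxpos
    have hxC : (x:ℂ) ≠ 0 := by exact_mod_cast hx0
    obtain ⟨hka, hkaω⟩ := hne x hx
    set Pa : ℂ := ∏ n, (k * (x:ℂ) - ω n) with hPadef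
    set S : ℂ := ∑ n, ∏ j ∈ Finset.univ.erase n, (k * (x:ℂ) - ω j) with hSdef
    have hPa : Pa ≠ 0 := hPne x hx
    have hs0 : Real.sqrt x ≠ 0 := by positivity
    have hsC : ((Real.sqrt x : ℝ) : ℂ) ≠ 0 := by exact_mod_cast hs0
    have hB : (k * (x:ℂ)) ^ ℓ ≠ 0 := pow_ne_zero _ hka
    have hEp : Complex.exp (Complex.I * (k * (x:ℂ))) ≠ 0 := Complex.exp_ne_zero _
    have hid : HasDerivAt (fun y : ℝ => ((y:ℝ):ℂ)) 1 x := by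
      simpa using (hasDerivAt_id x).ofReal_comp
    -- derivative of the denominator
    have hprod : HasDerivAt (fun y : ℝ => ∏ n, (k * (y:ℂ) - ω n)) (S * k) x := by
      have := HasDerivAt.fun_finsetProd (u := Finset.univ)
        (f := fun n (y:ℝ) => k * (y:ℂ) - ω n) (f' := fun _ => k)
        (x := x) (fun i _ => by simpa using ((hid.const_mul k).sub_const (ω i)))
      simpa [hSdef, Finset.sum_mul, smul_eq_mul] using this
    -- derivative of complex product
    have hprodC : HasDerivAt (fun ρ : ℂ => ∏ n, (ρ - ω n)) S (k * (x:ℂ)) := by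
      have := HasDerivAt.fun_finsetProd (u := Finset.univ)
        (f := fun n (z:ℂ) => z - ω n) (f' := fun _ => 1)
        (x := k * (x:ℂ)) (fun i _ => (hasDerivAt_id _).sub_const (ω i))
      simpa [hSdef] using this
    -- derivative of O at k*x
    have hOne : O (k * (x:ℂ)) ≠ 0 := by
      rw [hO]; exact div_ne_zero (mul_ne_zero hEp hPa) hB
    have hexpC : HasDerivAt (fun ρ : ℂ => Complex.exp (Complex.I * ρ))
        (Complex.exp (Complex.I * (k * (x:ℂ))) * Complex.I) (k * (x:ℂ)) :=
      by
      have h := ((hasDerivAt_id (k * (x:ℂ))).const_mul Complex.I).cexp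
      simp only [id_eq, mul_one] at h
      exact h
    have hOd : HasDerivAt O
        (((Complex.exp (Complex.I * (k * (x:ℂ))) * Complex.I * Pa +
            Complex.exp (Complex.I * (k * (x:ℂ))) * S) * (k * (x:ℂ)) ^ ℓ -
          Complex.exp (Complex.I * (k * (x:ℂ))) * Pa *
            ((ℓ:ℂ) * (k * (x:ℂ)) ^ (ℓ - 1))) / ((k * (x:ℂ)) ^ ℓ) ^ 2) (k * (x:ℂ)) := by
      have hfun : O = fun ρ => Complex.exp (Complex.I * ρ) * (∏ n, (ρ - ω n)) / ρ ^ ℓ :=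
        funext hO
      rw [hfun]
      exact (hexpC.mul hprodC).div (hasDerivAt_pow ℓ _) hB
    -- value of L
    have hcanB : (k * (x:ℂ)) * ((ℓ:ℂ) * (k * (x:ℂ)) ^ (ℓ - 1)) = (ℓ:ℂ) * (k * (x:ℂ)) ^ ℓ := by
      cases ℓ with
      | zero => simp
      | succ m => rw [pow_succ]; push_cast; ring
    have hLv : L (k * (x:ℂ)) = Complex.I * (k * (x:ℂ)) + (k * (x:ℂ)) * S / Pa - ℓ := by
      rw [hL _ hOne, hOd.deriv, hO]
      field_simp
      rw [← hPadef]
      rw [div_eq_iff hPa]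
      linear_combination (-(Pa * Pa)) * hcanB
    -- ODE in explicit form
    have hode' : (x:ℂ) * deriv r x * Pa =
        (Complex.I * (k * (x:ℂ)) * Pa + (k * (x:ℂ)) * S - (ℓ:ℂ) * Pa - Pa / 2) * r x := by
      have h := hode x hx
      rw [hLv] at h
      field_simp at h
      linear_combination h / 2
    -- derivatives of the factors of the numerator
    have hsq : HasDerivAt (fun y : ℝ => ((Real.sqrt y : ℝ) : ℂ))
        (((1 / (2 * Real.sqrt x) : ℝ)) : ℂ) x := (Real.hasDerivAt_sqrt hx0).ofReal_comp
    have hpow : HasDerivAt (fun y : ℝ => ((y:ℂ)) ^ ℓ) ((ℓ:ℂ) * (x:ℂ) ^ (ℓ - 1)) x := by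
      have := (hasDerivAt_pow ℓ ((x:ℝ):ℂ)).comp x hid
      simpa [Function.comp_def] using this
    have hexp : HasDerivAt (fun y : ℝ => Complex.exp (-(Complex.I * k * (y:ℂ))))
        (Complex.exp (-(Complex.I * k * (x:ℂ))) * (-(Complex.I * k))) x := by
      have h1 : HasDerivAt (fun y : ℝ => -(Complex.I * k * (y:ℂ))) (-(Complex.I * k)) x := by
        simpa using ((hid.const_mul (Complex.I * k)).fun_neg)
      exact h1.cexp
    have hdr : HasDerivAt r (deriv r x) x := (hr x hx).hasDerivAt
    have hN := ((hdr.fun_mul hsq).fun_mul hpow).fun_mul hexp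
    have hF := hN.fun_div hprod hPa
    have hzero : ((((deriv r x * ((Real.sqrt x : ℝ):ℂ) + r x * (((1 / (2 * Real.sqrt x) : ℝ)) : ℂ)) * (x:ℂ) ^ ℓ +
          r x * ((Real.sqrt x : ℝ):ℂ) * ((ℓ:ℂ) * (x:ℂ) ^ (ℓ - 1))) *
            Complex.exp (-(Complex.I * k * (x:ℂ))) +
          r x * ((Real.sqrt x : ℝ):ℂ) * (x:ℂ) ^ ℓ *
            (Complex.exp (-(Complex.I * k * (x:ℂ))) * (-(Complex.I * k)))) * Pa -
          r x * ((Real.sqrt x : ℝ):ℂ) * (x:ℂ) ^ ℓ * Complex.exp (-(Complex.I * k * (x:ℂ))) *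
            (S * k)) / Pa ^ 2 = 0 := by
      have hss : ((Real.sqrt x : ℝ):ℂ) * ((Real.sqrt x : ℝ):ℂ) = (x:ℂ) := by
        rw [← Complex.ofReal_mul, Real.mul_self_sqrt hxpos.le]
      have hcA : (x:ℂ) * ((ℓ:ℂ) * (x:ℂ) ^ (ℓ - 1)) = (ℓ:ℂ) * (x:ℂ) ^ ℓ := by
        cases ℓ with
        | zero => simp
        | succ m => rw [pow_succ]; push_cast; ring
      rw [div_eq_zero_iff]
      left
      push_cast
      field_simp
      linear_combination (2 * (x:ℂ) ^ ℓ * Complex.exp (-(Complex.I * k * (x:ℂ)))) * hode' +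
        (2 * deriv r x * (x:ℂ) ^ ℓ * Complex.exp (-(Complex.I * k * (x:ℂ))) * Pa +
          2 * r x * (ℓ:ℂ) * (x:ℂ) ^ (ℓ - 1) * Complex.exp (-(Complex.I * k * (x:ℂ))) * Pa -
          2 * r x * (x:ℂ) ^ ℓ * Complex.exp (-(Complex.I * k * (x:ℂ))) * Complex.I * k * Pa -
          2 * r x * (x:ℂ) ^ ℓ * Complex.exp (-(Complex.I * k * (x:ℂ))) * S * k) * hss +
        (2 * r x * Complex.exp (-(Complex.I * k * (x:ℂ))) * Pa) * hcA
    rw [hFdef]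
    convert hF using 1
    · rfl
    rw [← hzero]
  intro a ha
  have hconst : F a = F a₀ := by
    rcases le_total a₀ a with hle | hle
    · have hsub : Set.Icc a₀ a ⊆ J := hJc.out ha₀ ha
      have hc := constant_of_has_deriv_right_zero (f := F) (a := a₀) (b := a)
        (fun y hy => (key y (hsub hy)).continuousAt.continuousWithinAt)
        (fun y hy => (key y (hsub (Set.mem_Icc_of_Ico hy))).hasDerivWithinAt)
      exact hc a (Set.right_mem_Icc.2 hle)
    · have hsub : Set.Icc a a₀ ⊆ J := hJc.out ha ha₀
      have hc := constant_of_has_deriv_right_zero (f := F) (a := a) (b := a₀)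
        (fun y hy => (key y (hsub hy)).continuousAt.continuousWithinAt)
        (fun y hy => (key y (hsub (Set.mem_Icc_of_Ico hy))).hasDerivWithinAt)
      exact (hc a₀ (Set.right_mem_Icc.2 hle)).symm
  rw [hFdef] at hconst
  simp only at hconst
  exact (div_eq_div_iff (hPne a ha) (hPne a₀ ha₀)).mp hconst
end

section
/- (Scattering matrix poles are the radioactive poles.) If M(ω) is invertible (ω is not a pole of the Kapur–Peierls operator), then the scattering matrix extends holomorphically across ω even when O_c(a_c·ω) = 0 for some channels c: there exist an open neighborhood N ⊆ V of ω and a holomorphic W : N → Matrix (Fin n) (Fin n) ℂ such that W(z) = 𝑈(z) for every z ∈ N with O_c(a_c·z) ≠ 0 for all c. In particular, the roots of the outgoing wavefunctions are removable singularities (not poles) of the analytically continued scattering matrix. -/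
open Matrix Topology

section Aux

lemma auxDet {n : ℕ} {S : Set ℂ} (A : ℂ → Matrix (Fin n) (Fin n) ℂ)
    (hA : ∀ i j, DifferentiableOn ℂ (fun z => A z i j) S) :
    DifferentiableOn ℂ (fun z => (A z).det) S := by
  simp only [Matrix.det_apply']
  exact DifferentiableOn.fun_sum fun σ _ =>
    (DifferentiableOn.fun_finset_prod (fun i _ => hA (σ i) i)).const_mul _

lemma auxInv {n : ℕ} {S : Set ℂ} (A : ℂ → Matrix (Fin n) (Fin n) ℂ)
    (hA : ∀ i j, DifferentiableOn ℂ (fun z => A z i j) S)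
    (hdet : ∀ z ∈ S, (A z).det ≠ 0) (i j : Fin n) :
    DifferentiableOn ℂ (fun z => (A z)⁻¹ i j) S := by
  have hadj : DifferentiableOn ℂ (fun z => (A z).adjugate i j) S := by
    simp only [Matrix.adjugate_apply]
    apply auxDet
    intro i' j'
    by_cases h : i' = j
    · simp only [Matrix.updateRow_apply, h, if_true]
      exact differentiableOn_const _
    · simp only [Matrix.updateRow_apply, h, if_false]
      exact hA i' j'
  refine (((auxDet A hA).fun_inv hdet).fun_mul hadj).congr ?_
  intro z hz
  rw [Matrix.inv_def, Matrix.smul_apply, Ring.inverse_eq_inv, smul_eq_mul]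

lemma auxMul {n : ℕ} {S : Set ℂ} (A B : ℂ → Matrix (Fin n) (Fin n) ℂ)
    (hA : ∀ i j, DifferentiableOn ℂ (fun z => A z i j) S)
    (hB : ∀ i j, DifferentiableOn ℂ (fun z => B z i j) S) (i j : Fin n) :
    DifferentiableOn ℂ (fun z => (A z * B z) i j) S := by
  simp only [Matrix.mul_apply]
  exact DifferentiableOn.fun_sum fun k _ => (hA i k).fun_mul (hB k j)

lemma auxDiag {n : ℕ} {S : Set ℂ} (v : Fin n → ℂ → ℂ)
    (hv : ∀ c, DifferentiableOn ℂ (v c) S) (i j : Fin n) :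
    DifferentiableOn ℂ (fun z => Matrix.diagonal (fun c => v c z) i j) S := by
  by_cases h : i = j
  · subst h; simpa using hv i
  · simp only [Matrix.diagonal_apply_ne _ h]; exact differentiableOn_const _

lemma keyAlg {n : ℕ} (Rz Mz : Matrix (Fin n) (Fin n) ℂ) (Bv Ov Iv O'v I'v qv ρv : Fin n → ℂ)
    (hO : ∀ c, Ov c ≠ 0) (hq : ∀ c, qv c ≠ 0) (hq2 : ∀ c, qv c ^ 2 = ρv c)
    (hWr : ∀ c, O'v c * Iv c - I'v c * Ov c = 2 * Complex.I)
    (hR : IsUnit Rz.det) (hM : IsUnit Mz.det)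
    (hMdef : Mz = Rz⁻¹ * diagonal Ov + diagonal Bv * diagonal Ov
      - diagonal (fun c => ρv c * O'v c)) :
    diagonal qv * Mz⁻¹ *
      (Rz⁻¹ * diagonal Iv + diagonal Bv * diagonal Iv - diagonal (fun c => ρv c * I'v c)) *
      diagonal (fun c => (qv c)⁻¹)
    = (diagonal Ov)⁻¹ * diagonal Iv + (2 * Complex.I) •
        (diagonal qv * (diagonal Ov)⁻¹ *
          ((1 - Rz * (diagonal (fun c => ρv c * O'v c / Ov c) - diagonal Bv))⁻¹ * Rz) *
          (diagonal Ov)⁻¹ * diagonal qv) := by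
  have hOd : IsUnit (diagonal Ov).det := by
    rw [Matrix.det_diagonal]
    exact isUnit_iff_ne_zero.mpr (Finset.prod_ne_zero_iff.mpr fun c _ => hO c)
  have hoO : (diagonal fun c => (Ov c)⁻¹) * diagonal Ov = 1 := by
    rw [diagonal_mul_diagonal, ← Matrix.diagonal_one]
    exact congrArg diagonal (funext fun c => inv_mul_cancel₀ (hO c))
  have hoinv : (diagonal Ov)⁻¹ = diagonal (fun c => (Ov c)⁻¹) := Matrix.inv_eq_left_inv hoO
  have hLO : diagonal (fun c => ρv c * O'v c / Ov c) * diagonal Ov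
      = diagonal (fun c => ρv c * O'v c) := by
    rw [diagonal_mul_diagonal]
    exact congrArg diagonal (funext fun c => div_mul_cancel₀ _ (hO c))
  set X : Matrix (Fin n) (Fin n) ℂ :=
    1 - Rz * (diagonal (fun c => ρv c * O'v c / Ov c) - diagonal Bv) with hX
  have step2 : Rz * Mz = X * diagonal Ov := by
    have e1 : Rz * (Rz⁻¹ * diagonal Ov + diagonal Bv * diagonal Ov
          - diagonal (fun c => ρv c * O'v c / Ov c) * diagonal Ov)
        = (Rz * Rz⁻¹) * diagonal Ov + Rz * (diagonal Bv * diagonal Ov)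
          - Rz * (diagonal (fun c => ρv c * O'v c / Ov c) * diagonal Ov) := by noncomm_ring
    rw [hMdef, ← hLO, e1, Matrix.mul_nonsing_inv _ hR, hX]
    noncomm_ring
  have hXdet : IsUnit X.det := by
    have h3 : X.det * (diagonal Ov).det = Rz.det * Mz.det := by
      rw [← Matrix.det_mul, ← step2, Matrix.det_mul]
    refine isUnit_iff_ne_zero.mpr (left_ne_zero_of_mul (a := X.det) (b := (diagonal Ov).det) ?_)
    rw [h3]
    exact mul_ne_zero hR.ne_zero hM.ne_zero
  have hXval : X = Rz * Mz * (diagonal Ov)⁻¹ := by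
    rw [step2, Matrix.mul_nonsing_inv_cancel_right _ _ hOd]
  have hRL : X⁻¹ * Rz = diagonal Ov * Mz⁻¹ := by
    rw [hXval, Matrix.mul_inv_rev, Matrix.mul_inv_rev, Matrix.nonsing_inv_nonsing_inv _ hOd,
      Matrix.mul_assoc, Matrix.mul_assoc, Matrix.nonsing_inv_mul _ hR, Matrix.mul_one]
  rw [hRL, hoinv]
  have h2 : (diagonal fun c => ρv c * O'v c) *
        ((diagonal fun c => (Ov c)⁻¹) * diagonal Iv)
      = diagonal (fun c => ρv c * I'v c)
        + (2 * Complex.I) • (diagonal qv * diagonal qv * diagonal (fun c => (Ov c)⁻¹)) := by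
    simp only [diagonal_mul_diagonal, ← Matrix.diagonal_smul, Matrix.diagonal_add]
    refine congrArg diagonal (funext fun c => ?_)
    simp only [Pi.smul_apply, smul_eq_mul]
    linear_combination (ρv c * (Ov c)⁻¹) * hWr c - 2 * Complex.I * (Ov c)⁻¹ * hq2 c
      + (ρv c * I'v c) * mul_inv_cancel₀ (hO c)
  have hOOI : diagonal Ov * ((diagonal fun c => (Ov c)⁻¹) * diagonal Iv) = diagonal Iv := by
    rw [← Matrix.mul_assoc, diagonal_mul_diagonal, diagonal_mul_diagonal]
    refine congrArg diagonal (funext fun c => ?_)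
    rw [mul_inv_cancel₀ (hO c), one_mul]
  have hMI : Rz⁻¹ * diagonal Iv + diagonal Bv * diagonal Iv - diagonal (fun c => ρv c * I'v c)
      = Mz * ((diagonal fun c => (Ov c)⁻¹) * diagonal Iv)
        + (2 * Complex.I) • (diagonal qv * diagonal qv * diagonal (fun c => (Ov c)⁻¹)) := by
    rw [hMdef, Matrix.sub_mul, Matrix.add_mul, h2, Matrix.mul_assoc Rz⁻¹, hOOI,
      Matrix.mul_assoc (diagonal Bv), hOOI]
    noncomm_ring
  rw [hMI]
  simp only [Matrix.mul_add, Matrix.add_mul, mul_smul_comm, smul_mul_assoc, Matrix.mul_assoc]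
  have hMM : ∀ Y : Matrix (Fin n) (Fin n) ℂ, Mz⁻¹ * (Mz * Y) = Y := fun Y => by
    rw [← Matrix.mul_assoc, Matrix.nonsing_inv_mul _ hM, Matrix.one_mul]
  have hOO : ∀ Y : Matrix (Fin n) (Fin n) ℂ,
      (diagonal fun c => (Ov c)⁻¹) * (diagonal Ov * Y) = Y := fun Y => by
    rw [← Matrix.mul_assoc, hoO, Matrix.one_mul]
  rw [hMM, hOO]
  have d1 : diagonal qv * ((diagonal fun c => (Ov c)⁻¹) *
        (diagonal Iv * diagonal fun c => (qv c)⁻¹))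
      = (diagonal fun c => (Ov c)⁻¹) * diagonal Iv := by
    simp only [diagonal_mul_diagonal]
    refine congrArg diagonal (funext fun c => ?_)
    linear_combination (Iv c * (Ov c)⁻¹) * mul_inv_cancel₀ (hq c)
  have d2 : diagonal qv * (diagonal qv * ((diagonal fun c => (Ov c)⁻¹) *
        diagonal fun c => (qv c)⁻¹))
      = (diagonal fun c => (Ov c)⁻¹) * diagonal qv := by
    simp only [diagonal_mul_diagonal]
    refine congrArg diagonal (funext fun c => ?_)
    linear_combination ((Ov c)⁻¹ * qv c) * mul_inv_cancel₀ (hq c)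
  rw [d1, d2]

end Aux

/-- **Scattering matrix poles are the radioactive poles.** In multichannel
R-matrix theory, if `M(ω)` is invertible (i.e. `ω` is not a pole of the Kapur–Peierls
operator), the scattering matrix extends holomorphically across `ω`, even when some
outgoing wavefunctions vanish there: the roots of the outgoing wavefunctions are
removable singularities (not poles) of the analytically continued scattering matrix. -/
theorem stmt6 (n : ℕ) (a : Fin n → ℝ) (ha : ∀ c, 0 < a c)
    (O Iw : Fin n → ℂ → ℂ)
    (hO : ∀ c, Differentiable ℂ (O c)) (hIw : ∀ c, Differentiable ℂ (Iw c))
    (hWr : ∀ c (ρ : ℂ), deriv (O c) ρ * Iw c ρ - deriv (Iw c) ρ * O c ρ = 2 * Complex.I)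
    (ω : ℂ) (hω : ω ≠ 0) (V : Set ℂ) (hV : IsOpen V) (hωV : ω ∈ V)
    (R : ℂ → Matrix (Fin n) (Fin n) ℂ)
    (hR : ∀ i j, DifferentiableOn ℂ (fun z => R z i j) V)
    (hRinv : ∀ z ∈ V, IsUnit (R z).det)
    (B : Fin n → ℝ)
    (q : Fin n → ℂ → ℂ) (hq : ∀ c, DifferentiableOn ℂ (q c) V)
    (hq2 : ∀ c, ∀ z ∈ V, (q c z) ^ 2 = (a c : ℂ) * z)
    (Om Imat Lm RL U M : ℂ → Matrix (Fin n) (Fin n) ℂ)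
    (hOm : ∀ z, Om z = Matrix.diagonal fun c => O c ((a c : ℂ) * z))
    (hImat : ∀ z, Imat z = Matrix.diagonal fun c => Iw c ((a c : ℂ) * z))
    (hLm : ∀ z, Lm z = Matrix.diagonal fun c =>
      (a c : ℂ) * z * deriv (O c) ((a c : ℂ) * z) / O c ((a c : ℂ) * z))
    (hRL : ∀ z, RL z = (1 - R z * (Lm z - Matrix.diagonal fun c => (B c : ℂ)))⁻¹ * R z)
    (hU : ∀ z, U z = (Om z)⁻¹ * Imat z +
      (2 * Complex.I) • ((Matrix.diagonal fun c => q c z) * (Om z)⁻¹ * RL z * (Om z)⁻¹ *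
        Matrix.diagonal fun c => q c z))
    (hM : ∀ z, M z = (R z)⁻¹ * Om z + (Matrix.diagonal fun c => (B c : ℂ)) * Om z -
      Matrix.diagonal fun c => (a c : ℂ) * z * deriv (O c) ((a c : ℂ) * z))
    (hMω : IsUnit (M ω).det) :
    ∃ N ⊆ V, IsOpen N ∧ ω ∈ N ∧
      ∃ W : ℂ → Matrix (Fin n) (Fin n) ℂ,
        (∀ i j, DifferentiableOn ℂ (fun z => W z i j) N) ∧
        ∀ z ∈ N, (∀ c, O c ((a c : ℂ) * z) ≠ 0) → W z = U z := by
  -- derivatives of entire functions are entire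
  have hO' : ∀ c, Differentiable ℂ (deriv (O c)) := by
    intro c
    have h1 : AnalyticOnNhd ℂ (O c) Set.univ := fun z _ => (hO c).analyticAt z
    exact fun z => ((h1.deriv) z (Set.mem_univ z)).differentiableAt
  have hIw' : ∀ c, Differentiable ℂ (deriv (Iw c)) := by
    intro c
    have h1 : AnalyticOnNhd ℂ (Iw c) Set.univ := fun z _ => (hIw c).analyticAt z
    exact fun z => ((h1.deriv) z (Set.mem_univ z)).differentiableAt
  -- basic differentiabilities
  have hcomp : ∀ (f : ℂ → ℂ), Differentiable ℂ f → ∀ c : Fin n,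
      Differentiable ℂ (fun z => f ((a c : ℂ) * z)) := by
    intro f hf c
    exact hf.comp (differentiable_id.const_mul _)
  have hRinvd : ∀ i j, DifferentiableOn ℂ (fun z => (R z)⁻¹ i j) V :=
    auxInv R hR (fun z hz => (hRinv z hz).ne_zero)
  have hMd : ∀ i j, DifferentiableOn ℂ (fun z => M z i j) V := by
    intro i j
    simp only [hM, Matrix.sub_apply, Matrix.add_apply, hOm]
    refine DifferentiableOn.sub (DifferentiableOn.add ?_ ?_) ?_
    · exact auxMul (fun z => (R z)⁻¹) (fun z => Matrix.diagonal fun c => O c ((a c : ℂ) * z))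
        hRinvd (auxDiag _ fun c => (hcomp (O c) (hO c) c).differentiableOn) i j
    · exact auxMul (fun _ => Matrix.diagonal fun c => (B c : ℂ))
        (fun z => Matrix.diagonal fun c => O c ((a c : ℂ) * z))
        (auxDiag _ fun c => differentiableOn_const _)
        (auxDiag _ fun c => (hcomp (O c) (hO c) c).differentiableOn) i j
    · exact auxDiag (fun c z => (a c : ℂ) * z * deriv (O c) ((a c : ℂ) * z))
        (fun c => ((differentiable_id.const_mul _).mul
          (hcomp (deriv (O c)) (hO' c) c)).differentiableOn) i j
  -- the neighborhood
  set N : Set ℂ := (V ∩ (fun z => (M z).det) ⁻¹' {(0 : ℂ)}ᶜ) ∩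
      ⋂ c, (V ∩ (q c) ⁻¹' {(0 : ℂ)}ᶜ) with hN
  have hNV : N ⊆ V := fun z hz => hz.1.1
  have hNopen : IsOpen N := by
    refine IsOpen.inter ?_ (isOpen_iInter_of_finite fun c => ?_)
    · exact ((auxDet M hMd).continuousOn).isOpen_inter_preimage hV isOpen_compl_singleton
    · exact ((hq c).continuousOn).isOpen_inter_preimage hV isOpen_compl_singleton
  have hqω : ∀ c, q c ω ≠ 0 := by
    intro c h0
    have := hq2 c ω hωV
    rw [h0] at this
    simp only [ne_eq, zero_pow, OfNat.ofNat_ne_zero, not_false_eq_true] at this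
    exact (mul_ne_zero (Complex.ofReal_ne_zero.mpr (ha c).ne') hω) this.symm
  have hωN : ω ∈ N := by
    refine ⟨⟨hωV, hMω.ne_zero⟩, Set.mem_iInter.mpr fun c => ⟨hωV, hqω c⟩⟩
  -- data extracted from membership in N
  have hmemV : ∀ z ∈ N, z ∈ V := fun z hz => hNV hz
  have hmemdet : ∀ z ∈ N, (M z).det ≠ 0 := fun z hz => hz.1.2
  have hmemq : ∀ z ∈ N, ∀ c, q c z ≠ 0 := fun z hz c => (Set.mem_iInter.mp hz.2 c).2
  refine ⟨N, hNV, hNopen, hωN, fun z =>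
    Matrix.diagonal (fun c => q c z) * (M z)⁻¹ *
      ((R z)⁻¹ * Matrix.diagonal (fun c => Iw c ((a c : ℂ) * z)) +
        Matrix.diagonal (fun c => (B c : ℂ)) * Matrix.diagonal (fun c => Iw c ((a c : ℂ) * z)) -
        Matrix.diagonal (fun c => (a c : ℂ) * z * deriv (Iw c) ((a c : ℂ) * z))) *
      Matrix.diagonal (fun c => (q c z)⁻¹), ?_, ?_⟩
  · -- differentiability of W on N
    intro i j
    refine auxMul _ (fun z => Matrix.diagonal (fun c => (q c z)⁻¹)) ?_ ?_ i j
    · refine auxMul _ _ ?_ ?_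
      · refine auxMul (fun z => Matrix.diagonal (fun c => q c z)) (fun z => (M z)⁻¹) ?_ ?_
        · exact auxDiag _ fun c => (hq c).mono hNV
        · exact auxInv M (fun i j => (hMd i j).mono hNV) hmemdet
      · intro i j
        simp only [Matrix.sub_apply, Matrix.add_apply]
        refine DifferentiableOn.sub (DifferentiableOn.add ?_ ?_) ?_
        · exact auxMul (fun z => (R z)⁻¹)
            (fun z => Matrix.diagonal fun c => Iw c ((a c : ℂ) * z))
            (fun i j => (hRinvd i j).mono hNV)
            (auxDiag _ fun c => (hcomp (Iw c) (hIw c) c).differentiableOn) i j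
        · exact auxMul (fun _ => Matrix.diagonal fun c => (B c : ℂ))
            (fun z => Matrix.diagonal fun c => Iw c ((a c : ℂ) * z))
            (auxDiag _ fun c => differentiableOn_const _)
            (auxDiag _ fun c => (hcomp (Iw c) (hIw c) c).differentiableOn) i j
        · exact auxDiag (fun c z => (a c : ℂ) * z * deriv (Iw c) ((a c : ℂ) * z))
            (fun c => ((differentiable_id.const_mul _).mul
              (hcomp (deriv (Iw c)) (hIw' c) c)).differentiableOn) i j
    · exact auxDiag _ fun c => ((hq c).mono hNV).inv (fun z hz => hmemq z hz c)
  · -- equality with U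
    intro z hz hOz
    rw [hU z, hRL z, hOm z, hImat z, hLm z]
    exact keyAlg (R z) (M z) (fun c => (B c : ℂ)) (fun c => O c ((a c : ℂ) * z))
      (fun c => Iw c ((a c : ℂ) * z)) (fun c => deriv (O c) ((a c : ℂ) * z))
      (fun c => deriv (Iw c) ((a c : ℂ) * z)) (fun c => q c z) (fun c => (a c : ℂ) * z)
      hOz (hmemq z hz) (fun c => hq2 c z (hmemV z hz)) (fun c => hWr c _)
      (hRinv z (hmemV z hz)) (isUnit_iff_ne_zero.mpr (hmemdet z hz))
      (by rw [hM z, hOm z])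
end

section
/- (Gohberg–Sigal residue normalization, non-degenerate case.) If the kernel of M(z₀) is one-dimensional, spanned by a nonzero vector q ∈ ℂⁿ with qᵀ·M'(z₀)·q ≠ 0, then M(z) is invertible for all z ≠ z₀ in some punctured neighborhood of z₀, and (z − z₀)·M(z)⁻¹ converges, as z → z₀ with z ≠ z₀, to (qᵀ·M'(z₀)·q)⁻¹ · (q·qᵀ). In particular M(z)⁻¹ has a simple (Laurent order one) pole at z₀ whose residue is the rank-one matrix q·qᵀ normalized so that qᵀ·M'(z₀)·q = 1. -/
open Matrix Topology Filter

lemma diffAt_det {n : ℕ} {N : ℂ → Matrix (Fin n) (Fin n) ℂ} {z₀ : ℂ}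
    (h : ∀ i j, DifferentiableAt ℂ (fun z => N z i j) z₀) :
    DifferentiableAt ℂ (fun z => (N z).det) z₀ := by
  simp only [Matrix.det_apply', Units.smul_def, zsmul_eq_mul]
  exact DifferentiableAt.fun_sum fun σ _ =>
    (differentiableAt_const _).mul (DifferentiableAt.fun_finsetProd fun i _ => h (σ i) i)

/-- **Gohberg–Sigal residue normalization, non-degenerate case.** If the
kernel of the holomorphic complex-symmetric matrix function `M` at `z₀` is the line
spanned by `q` with `qᵀ·M'(z₀)·q ≠ 0`, then `M(z)` is invertible on a punctured
neighborhood of `z₀` and `(z − z₀)·M(z)⁻¹ → (qᵀ·M'(z₀)·q)⁻¹ · q·qᵀ`: a simple pole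
with rank-one residue normalized by `qᵀ·M'(z₀)·q = 1`. -/
theorem stmt7 (U : Set ℂ) (hU : IsOpen U) (z₀ : ℂ) (hz₀ : z₀ ∈ U) (n : ℕ)
    (M : ℂ → Matrix (Fin n) (Fin n) ℂ)
    (hM : ∀ i j, DifferentiableOn ℂ (fun z => M z i j) U)
    (hsym : ∀ z ∈ U, (M z)ᵀ = M z)
    (M' : Matrix (Fin n) (Fin n) ℂ)
    (hM' : ∀ i j, M' i j = deriv (fun z => M z i j) z₀)
    (q : Fin n → ℂ) (hq : q ≠ 0)
    (hker : (M z₀).mulVec q = 0)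
    (hker1 : ∀ v, (M z₀).mulVec v = 0 → ∃ c : ℂ, v = c • q)
    (hnorm : q ⬝ᵥ M'.mulVec q ≠ 0) :
    (∀ᶠ z in 𝓝[≠] z₀, IsUnit (M z).det) ∧
      Tendsto (fun z : ℂ => (z - z₀) • (M z)⁻¹) (𝓝[≠] z₀)
        (𝓝 ((q ⬝ᵥ M'.mulVec q)⁻¹ • vecMulVec q q)) := by
  obtain ⟨i₀, hqi₀⟩ : ∃ i, q i ≠ 0 := Function.ne_iff.mp hq
  have hmem : U ∈ 𝓝 z₀ := hU.mem_nhds hz₀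
  have hMd : ∀ i j, DifferentiableAt ℂ (fun z => M z i j) z₀ :=
    fun i j => (hM i j).differentiableAt hmem
  have hMder : ∀ i j, HasDerivAt (fun z => M z i j) (M' i j) z₀ := by
    intro i j; rw [hM' i j]; exact (hMd i j).hasDerivAt
  set d : ℂ := q ⬝ᵥ M'.mulVec q with hd
  have hAt : (M z₀)ᵀ = M z₀ := hsym z₀ hz₀
  have hdetA : (M z₀).det = 0 := (Matrix.exists_mulVec_eq_zero_iff).mp ⟨q, hq, hker⟩
  -- columns of the adjugate lie in the kernel
  have hAadj : M z₀ * adjugate (M z₀) = 0 := by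
    rw [Matrix.mul_adjugate, hdetA, zero_smul]
  have hcol : ∀ j, ∃ cj : ℂ, (fun i => adjugate (M z₀) i j) = cj • q := by
    intro j
    refine hker1 _ ?_
    ext i
    have := congrFun (congrFun hAadj i) j
    simpa [Matrix.mul_apply, Matrix.mulVec, dotProduct] using this
  choose c hc using hcol
  have hce : ∀ i j, adjugate (M z₀) i j = c j * q i := by
    intro i j
    simpa using congrFun (hc j) i
  -- symmetry of the adjugate
  have hadjsym : ∀ i j, adjugate (M z₀) i j = adjugate (M z₀) j i := by
    intro i j
    have h1 : (adjugate (M z₀))ᵀ = adjugate (M z₀) := by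
      rw [Matrix.adjugate_transpose, hAt]
    simpa [Matrix.transpose_apply] using congrFun (congrFun h1 j) i
  set α : ℂ := c i₀ / q i₀ with hα
  have hαe : ∀ i j, adjugate (M z₀) i j = α * q i * q j := by
    intro i j
    have h1 : c j * q i₀ = c i₀ * q j := by
      have h2 := hadjsym i₀ j
      rw [hce i₀ j, hce j i₀] at h2
      exact h2
    have hcj : c j = α * q j := by
      rw [hα]
      field_simp
      linear_combination h1
    rw [hce i j, hcj]; ring
  -- `α ≠ 0` via invertibility of a column-replaced matrix
  set u : Fin n → ℂ := fun i => starRingEnd ℂ (q i) with hu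
  have hs : q ⬝ᵥ u ≠ 0 := by
    have he : q ⬝ᵥ u = ((∑ i, Complex.normSq (q i) : ℝ) : ℂ) := by
      simp [dotProduct, hu, Complex.mul_conj]
    rw [he, Complex.ofReal_ne_zero]
    exact ne_of_gt (Finset.sum_pos' (fun i _ => Complex.normSq_nonneg _)
      ⟨i₀, Finset.mem_univ _, Complex.normSq_pos.mpr hqi₀⟩)
  have hqM : q ᵥ* M z₀ = 0 := by
    rw [← hAt, Matrix.vecMul_transpose, hker]
  have hdetE : ((M z₀).updateCol i₀ u).det ≠ 0 := by
    intro h0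
    obtain ⟨v, hv0, hv⟩ := (Matrix.exists_mulVec_eq_zero_iff).mpr h0
    have hqE : q ᵥ* ((M z₀).updateCol i₀ u) = fun j => if j = i₀ then q ⬝ᵥ u else 0 := by
      ext j
      rcases eq_or_ne j i₀ with rfl | hj
      · simp [Matrix.vecMul, dotProduct, Matrix.updateCol_apply]
      · have := congrFun hqM j
        simp only [Matrix.vecMul, dotProduct, Pi.zero_apply] at this
        simpa [Matrix.vecMul, dotProduct, Matrix.updateCol_apply, hj] using this
    have hvi₀ : v i₀ = 0 := by
      have h2 : q ⬝ᵥ ((M z₀).updateCol i₀ u *ᵥ v) = 0 := by rw [hv]; simp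
      rw [Matrix.dotProduct_mulVec, hqE] at h2
      simp only [dotProduct, ite_mul, zero_mul, Finset.sum_ite_eq', Finset.mem_univ,
        if_true] at h2
      exact (mul_eq_zero.mp h2).resolve_left hs
    have hMv : (M z₀).mulVec v = 0 := by
      ext i
      have := congrFun hv i
      simp only [Matrix.mulVec, dotProduct, Matrix.updateCol_apply, Pi.zero_apply] at this ⊢
      rw [← this]
      refine Finset.sum_congr rfl fun x _ => ?_
      rcases eq_or_ne x i₀ with rfl | hx
      · simp [hvi₀]
      · simp [hx]
    obtain ⟨cv, rfl⟩ := hker1 v hMv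
    have : cv = 0 := by
      have := hvi₀
      simp only [Pi.smul_apply, smul_eq_mul] at this
      exact (mul_eq_zero.mp this).resolve_right hqi₀
    exact hv0 (by rw [this, zero_smul])
  have hα0 : α ≠ 0 := by
    have hcr : ((M z₀).updateCol i₀ u).det = (adjugate (M z₀) *ᵥ u) i₀ := by
      rw [← Matrix.cramer_eq_adjugate_mulVec, Matrix.cramer_apply]
    have he2 : (adjugate (M z₀) *ᵥ u) i₀ = α * q i₀ * (q ⬝ᵥ u) := by
      simp only [Matrix.mulVec, dotProduct]
      rw [Finset.mul_sum]
      exact Finset.sum_congr rfl fun j _ => by rw [hαe]; ring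
    intro h0
    exact hdetE (by rw [hcr, he2, h0, zero_mul, zero_mul])
  -- differentiability of the adjugate and determinant
  have hadjd : ∀ i j, DifferentiableAt ℂ (fun z => adjugate (M z) i j) z₀ := by
    intro i j
    simp only [Matrix.adjugate_apply]
    refine diffAt_det fun a b => ?_
    rcases eq_or_ne a j with rfl | hab
    · simp [Matrix.updateRow_apply]
    · simpa [Matrix.updateRow_apply, hab] using hMd a b
  have hgd : DifferentiableAt ℂ (fun z => (M z).det) z₀ := diffAt_det hMd
  set D : ℂ := deriv (fun z => (M z).det) z₀ with hD
  have hgD : HasDerivAt (fun z => (M z).det) D z₀ := hgd.hasDerivAt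
  -- the derivative identity: D = α * d
  have hw : ∀ k, HasDerivAt (fun z => ((M z) *ᵥ q) k) ((M' *ᵥ q) k) z₀ := by
    intro k
    have : HasDerivAt (fun z => ∑ l, M z k l * q l) (∑ l, M' k l * q l) z₀ :=
      HasDerivAt.fun_sum fun l _ => (hMder k l).mul_const (q l)
    simpa [Matrix.mulVec, dotProduct] using this
  have hφ : HasDerivAt (fun z => ∑ k, adjugate (M z) i₀ k * ((M z) *ᵥ q) k)
      (∑ k, (deriv (fun z => adjugate (M z) i₀ k) z₀ * ((M z₀) *ᵥ q) k
        + adjugate (M z₀) i₀ k * (M' *ᵥ q) k)) z₀ :=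
    HasDerivAt.fun_sum fun k _ => ((hadjd i₀ k).hasDerivAt).mul (hw k)
  have hid : (fun z => ∑ k, adjugate (M z) i₀ k * ((M z) *ᵥ q) k)
      = fun z => (M z).det * q i₀ := by
    funext z
    have h1 : adjugate (M z) *ᵥ ((M z) *ᵥ q) = (M z).det • q := by
      rw [Matrix.mulVec_mulVec, Matrix.adjugate_mul, Matrix.smul_mulVec,
        Matrix.one_mulVec]
    have := congrFun h1 i₀
    simpa [Matrix.mulVec, dotProduct] using this
  have hφ2 : HasDerivAt (fun z => (M z).det * q i₀) (D * q i₀) z₀ := hgD.mul_const _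
  have hTeq : D * q i₀ = α * q i₀ * d := by
    have huniq := (hid ▸ hφ).unique hφ2
    rw [← huniq]
    simp only [hker, Pi.zero_apply, mul_zero, zero_add]
    rw [hd]
    simp only [dotProduct]
    rw [Finset.mul_sum]
    exact Finset.sum_congr rfl fun k _ => by rw [hαe]; ring
  have hDαd : D = α * d := by
    have : D * q i₀ = (α * d) * q i₀ := by rw [hTeq]; ring
    exact mul_right_cancel₀ hqi₀ this
  have hD0 : D ≠ 0 := by rw [hDαd]; exact mul_ne_zero hα0 hnorm
  -- part 1: eventual invertibility
  have hslope : Tendsto (slope (fun z => (M z).det) z₀) (𝓝[≠] z₀) (𝓝 D) :=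
    hasDerivAt_iff_tendsto_slope.mp hgD
  have hsl0 : ∀ᶠ z in 𝓝[≠] z₀, slope (fun z => (M z).det) z₀ z ≠ 0 :=
    hslope.eventually_ne hD0
  have hzne : ∀ᶠ z in 𝓝[≠] z₀, z ≠ z₀ := eventually_mem_nhdsWithin
  have hgne : ∀ᶠ z in 𝓝[≠] z₀, (M z).det ≠ 0 := by
    filter_upwards [hsl0] with z h1
    intro h0
    exact h1 (by rw [slope_def_field, h0, hdetA, sub_zero, zero_div])
  refine ⟨hgne.mono fun z h => isUnit_iff_ne_zero.mpr h, ?_⟩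
  -- part 2: the limit
  have hadjt : Tendsto (fun z => adjugate (M z)) (𝓝[≠] z₀) (𝓝 (adjugate (M z₀))) := by
    have : ContinuousAt (fun z => adjugate (M z)) z₀ :=
      continuousAt_pi.mpr fun i => continuousAt_pi.mpr fun j => (hadjd i j).continuousAt
    exact this.tendsto.mono_left nhdsWithin_le_nhds
  have htend : Tendsto (fun z => (slope (fun z => (M z).det) z₀ z)⁻¹ • adjugate (M z))
      (𝓝[≠] z₀) (𝓝 (D⁻¹ • adjugate (M z₀))) := (hslope.inv₀ hD0).smul hadjt
  have heq : ∀ᶠ z in 𝓝[≠] z₀,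
      (slope (fun z => (M z).det) z₀ z)⁻¹ • adjugate (M z) = (z - z₀) • (M z)⁻¹ := by
    filter_upwards [hgne, hzne] with z h1 h2
    have hzz : z - z₀ ≠ 0 := sub_ne_zero.mpr h2
    rw [Matrix.inv_def, Ring.inverse_eq_inv, smul_smul, slope_def_field, hdetA, sub_zero]
    congr 1
    rw [inv_div]
    field_simp
  have hfin : D⁻¹ • adjugate (M z₀) = d⁻¹ • vecMulVec q q := by
    ext i j
    simp only [Matrix.smul_apply, Matrix.vecMulVec_apply, smul_eq_mul, hαe, hDαd]
    field_simp
  have := htend.congr' heq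
  rwa [hfin] at this
end

section
/- (Gohberg–Sigal residue normalization, degenerate semi-simple case.) If the kernel of M(z₀) has dimension K ≥ 1 and admits a basis q_1,…,q_K normalized so that q_mᵀ·M'(z₀)·q_{m'} = δ_{m,m'} for all m, m', then M(z) is invertible for all z ≠ z₀ in some punctured neighborhood of z₀, and (z − z₀)·M(z)⁻¹ converges, as z → z₀ with z ≠ z₀, to Σ_{m=1}^{K} q_m·q_mᵀ. In particular the pole of M(z)⁻¹ at z₀ has Laurent order one with a residue of rank K. -/
set_option linter.unusedSectionVars false

open Matrix Topology Filter

section helpers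
variable {X : Type*} {l : Filter X} {m p o : Type*} [Fintype m] [Fintype p] [DecidableEq m] [DecidableEq p]

lemma tendsto_matmul {f : X → Matrix m p ℂ} {g : X → Matrix p o ℂ} {A : Matrix m p ℂ} {B : Matrix p o ℂ}
    (hf : Tendsto f l (𝓝 A)) (hg : Tendsto g l (𝓝 B)) :
    Tendsto (fun x => f x * g x) l (𝓝 (A * B)) := by
  refine tendsto_pi_nhds.mpr ?_
  intro i
  rw [tendsto_pi_nhds]
  intro j
  have h1 := tendsto_pi_nhds.mp hf i
  have h2 : ∀ k, Tendsto (fun x => f x i k * g x k j) l (𝓝 (A i k * B k j)) := fun k =>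
    ((tendsto_pi_nhds.mp h1 k).mul (tendsto_pi_nhds.mp (tendsto_pi_nhds.mp hg k) j))
  have := tendsto_finset_sum Finset.univ (fun k _ => h2 k)
  simpa only [Matrix.mul_apply] using this

lemma tendsto_matinv {f : X → Matrix m m ℂ} {A : Matrix m m ℂ}
    (hf : Tendsto f l (𝓝 A)) (hA : A.det ≠ 0) :
    Tendsto (fun x => (f x)⁻¹) l (𝓝 A⁻¹) := by
  have : ContinuousAt Ring.inverse A.det :=
    NormedRing.inverse_continuousAt (Units.mk0 A.det hA)
  exact (continuousAt_matrix_inv A this).tendsto.comp hf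

lemma smul_matinv {c : ℂ} (hc : c ≠ 0) {A : Matrix m m ℂ} (hA : IsUnit A.det) :
    (c • A)⁻¹ = c⁻¹ • A⁻¹ := by
  apply inv_eq_right_inv
  rw [smul_mul_smul_comm, A.mul_nonsing_inv hA, mul_inv_cancel₀ hc, one_smul]

lemma tendsto_entry {f : X → Matrix m p ℂ} {A : Matrix m p ℂ}
    (hf : Tendsto f l (𝓝 A)) (i : m) (j : p) :
    Tendsto (fun x => f x i j) l (𝓝 (A i j)) :=
  tendsto_pi_nhds.mp (tendsto_pi_nhds.mp hf i) j

lemma tendsto_fromBlocks {fA : X → Matrix m m ℂ} {fB : X → Matrix m p ℂ}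
    {fC : X → Matrix p m ℂ} {fD : X → Matrix p p ℂ}
    {A : Matrix m m ℂ} {B : Matrix m p ℂ} {C : Matrix p m ℂ} {D : Matrix p p ℂ}
    (hA : Tendsto fA l (𝓝 A)) (hB : Tendsto fB l (𝓝 B))
    (hC : Tendsto fC l (𝓝 C)) (hD : Tendsto fD l (𝓝 D)) :
    Tendsto (fun x => fromBlocks (fA x) (fB x) (fC x) (fD x)) l (𝓝 (fromBlocks A B C D)) := by
  refine tendsto_pi_nhds.mpr ?_
  intro i
  rw [tendsto_pi_nhds]
  intro j
  cases i <;> cases j <;>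
    simp only [fromBlocks_apply₁₁, fromBlocks_apply₁₂, fromBlocks_apply₂₁, fromBlocks_apply₂₂]
  · exact tendsto_entry hA _ _
  · exact tendsto_entry hB _ _
  · exact tendsto_entry hC _ _
  · exact tendsto_entry hD _ _

lemma blocks_inv (A : Matrix m m ℂ) (B : Matrix m p ℂ) (C : Matrix p m ℂ) (D : Matrix p p ℂ)
    (hD : IsUnit D.det) (hS : IsUnit (A - B * D⁻¹ * C).det) :
    IsUnit (fromBlocks A B C D).det ∧
      (fromBlocks A B C D)⁻¹ =
        fromBlocks (A - B * D⁻¹ * C)⁻¹ (-((A - B * D⁻¹ * C)⁻¹ * B * D⁻¹))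
          (-(D⁻¹ * C * (A - B * D⁻¹ * C)⁻¹))
          (D⁻¹ + D⁻¹ * C * (A - B * D⁻¹ * C)⁻¹ * B * D⁻¹) := by
  letI iD := D.invertibleOfIsUnitDet hD
  have hDinv : ⅟D = D⁻¹ := invOf_eq_nonsing_inv D
  letI iS : Invertible (A - B * ⅟D * C) := by
    rw [hDinv]; exact (A - B * D⁻¹ * C).invertibleOfIsUnitDet hS
  letI := fromBlocks₂₂Invertible A B C D
  refine ⟨isUnit_det_of_invertible _, ?_⟩
  have h := invOf_fromBlocks₂₂_eq A B C D
  rw [invOf_eq_nonsing_inv] at h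
  rw [h]
  simp only [invOf_eq_nonsing_inv, hDinv]

end helpers

/-- Core analytic lemma over a sum index type. -/
lemma core {p : Type*} [Fintype p] [DecidableEq p] {K : ℕ}
    (T : ℂ → Matrix (Fin K ⊕ p) (Fin K ⊕ p) ℂ) (z₀ : ℂ)
    (hdiff : ∀ r s, DifferentiableAt ℂ (fun z => T z r s) z₀)
    (hrow0 : ∀ i s, T z₀ (Sum.inl i) s = 0)
    (hcol0 : ∀ r i, T z₀ r (Sum.inl i) = 0)
    (hder : ∀ i j, deriv (fun z => T z (Sum.inl i) (Sum.inl j)) z₀ = if i = j then 1 else 0)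
    (hD : (T z₀).toBlocks₂₂.det ≠ 0) :
    (∀ᶠ z in 𝓝[≠] z₀, IsUnit (T z).det) ∧
      Tendsto (fun z => (z - z₀) • (T z)⁻¹) (𝓝[≠] z₀)
        (𝓝 (fromBlocks (1 : Matrix (Fin K) (Fin K) ℂ) 0 0 0)) := by
  set l := 𝓝[≠] z₀ with hl
  set Af : ℂ → Matrix (Fin K) (Fin K) ℂ := fun z => (T z).toBlocks₁₁ with hAf
  set Bf : ℂ → Matrix (Fin K) p ℂ := fun z => (T z).toBlocks₁₂ with hBf
  set Cf : ℂ → Matrix p (Fin K) ℂ := fun z => (T z).toBlocks₂₁ with hCf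
  set Df : ℂ → Matrix p p ℂ := fun z => (T z).toBlocks₂₂ with hDf
  set D0 : Matrix p p ℂ := (T z₀).toBlocks₂₂ with hD0
  -- continuity of blocks along l
  have hct : ∀ r s, Tendsto (fun z => T z r s) l (𝓝 (T z₀ r s)) := fun r s =>
    ((hdiff r s).continuousAt.tendsto).mono_left nhdsWithin_le_nhds
  have hDc : Tendsto Df l (𝓝 D0) := by
    refine tendsto_pi_nhds.mpr ?_; intro i; rw [tendsto_pi_nhds]; intro j
    exact hct (Sum.inr i) (Sum.inr j)
  have hBc : Tendsto Bf l (𝓝 0) := by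
    refine tendsto_pi_nhds.mpr ?_; intro i; rw [tendsto_pi_nhds]; intro j
    simpa [hrow0, hBf, Matrix.toBlocks₁₂] using hct (Sum.inl i) (Sum.inr j)
  have hCc : Tendsto Cf l (𝓝 0) := by
    refine tendsto_pi_nhds.mpr ?_; intro i; rw [tendsto_pi_nhds]; intro j
    simpa [hcol0, hCf, Matrix.toBlocks₂₁] using hct (Sum.inr i) (Sum.inl j)
  -- slopes
  have hslope : ∀ (r s : Fin K ⊕ p), T z₀ r s = 0 →
      Tendsto (fun z => (z - z₀)⁻¹ * T z r s) l (𝓝 (deriv (fun z => T z r s) z₀)) := by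
    intro r s h0
    have := hasDerivAt_iff_tendsto_slope.mp (hdiff r s).hasDerivAt
    refine this.congr (fun z => ?_)
    rw [slope_def_field, h0, sub_zero, div_eq_inv_mul]
  have hAs : Tendsto (fun z => (z - z₀)⁻¹ • Af z) l (𝓝 (1 : Matrix (Fin K) (Fin K) ℂ)) := by
    refine tendsto_pi_nhds.mpr ?_; intro i; rw [tendsto_pi_nhds]; intro j
    have := hslope (Sum.inl i) (Sum.inl j) (hrow0 i _)
    rw [hder i j] at this
    simpa [Matrix.one_apply, Matrix.smul_apply, smul_eq_mul, hAf, Matrix.toBlocks₁₁] using this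
  set B' : Matrix (Fin K) p ℂ := Matrix.of fun i j => deriv (fun z => T z (Sum.inl i) (Sum.inr j)) z₀ with hB'
  have hBs : Tendsto (fun z => (z - z₀)⁻¹ • Bf z) l (𝓝 B') := by
    refine tendsto_pi_nhds.mpr ?_; intro i; rw [tendsto_pi_nhds]; intro j
    have := hslope (Sum.inl i) (Sum.inr j) (hrow0 i _)
    simpa [Matrix.smul_apply, smul_eq_mul, hBf, hB', Matrix.toBlocks₁₂] using this
  -- sigma
  set σ : ℂ → Matrix (Fin K) (Fin K) ℂ :=
    fun z => (z - z₀)⁻¹ • Af z - (z - z₀)⁻¹ • (Bf z * (Df z)⁻¹ * Cf z) with hσdef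
  have hσ : Tendsto σ l (𝓝 1) := by
    have := hAs.sub (tendsto_matmul (tendsto_matmul hBs (tendsto_matinv hDc hD)) hCc)
    simpa using this
  have hσdet : ∀ᶠ z in l, (σ z).det ≠ 0 := by
    have hdet : Tendsto (fun z => (σ z).det) l (𝓝 (1 : ℂ)) := by
      have := (continuous_id.matrix_det.tendsto (1 : Matrix (Fin K) (Fin K) ℂ)).comp hσ
      simpa [Function.comp_def] using this
    exact hdet.eventually_ne one_ne_zero
  have hDdet : ∀ᶠ z in l, (Df z).det ≠ 0 := by
    have hdet : Tendsto (fun z => (Df z).det) l (𝓝 D0.det) :=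
      (continuous_id.matrix_det.tendsto D0).comp hDc
    exact hdet.eventually_ne hD
  have hne : ∀ᶠ z in l, z ≠ z₀ := by
    rw [hl]; exact eventually_mem_nhdsWithin.mono (fun z hz => hz)
  -- eventual identity
  have key : ∀ᶠ z in l, IsUnit (T z).det ∧ (z - z₀) • (T z)⁻¹ =
      fromBlocks ((σ z)⁻¹) (-((σ z)⁻¹ * Bf z * (Df z)⁻¹)) (-((Df z)⁻¹ * Cf z * (σ z)⁻¹))
        ((z - z₀) • (Df z)⁻¹ + (Df z)⁻¹ * Cf z * (σ z)⁻¹ * Bf z * (Df z)⁻¹) := by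
    filter_upwards [hσdet, hDdet, hne] with z hσz hdz hzz
    have hzsub : z - z₀ ≠ 0 := sub_ne_zero.mpr hzz
    have hs_eq : Af z - Bf z * (Df z)⁻¹ * Cf z = (z - z₀) • σ z := by
      rw [hσdef]
      simp only [smul_sub, smul_smul, mul_inv_cancel₀ hzsub, one_smul]
    have hsunit : IsUnit (Af z - Bf z * (Df z)⁻¹ * Cf z).det := by
      rw [hs_eq, det_smul]
      exact isUnit_iff_ne_zero.mpr (mul_ne_zero (pow_ne_zero _ hzsub) hσz)
    obtain ⟨hTu, hTi⟩ := blocks_inv (Af z) (Bf z) (Cf z) (Df z) (isUnit_iff_ne_zero.mpr hdz) hsunit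
    have hTz : fromBlocks (Af z) (Bf z) (Cf z) (Df z) = T z := fromBlocks_toBlocks (T z)
    rw [hTz] at hTu hTi
    refine ⟨hTu, ?_⟩
    have hsinv : (Af z - Bf z * (Df z)⁻¹ * Cf z)⁻¹ = (z - z₀)⁻¹ • (σ z)⁻¹ := by
      rw [hs_eq, smul_matinv hzsub (isUnit_iff_ne_zero.mpr hσz)]
    rw [hTi, hsinv, fromBlocks_smul]
    simp only [smul_neg, smul_add, Matrix.smul_mul, Matrix.mul_smul, smul_mul_assoc, smul_smul,
      mul_inv_cancel₀ hzsub, one_smul]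
  constructor
  · exact key.mono fun z hz => hz.1
  · have hGlim : Tendsto (fun z =>
        fromBlocks ((σ z)⁻¹) (-((σ z)⁻¹ * Bf z * (Df z)⁻¹)) (-((Df z)⁻¹ * Cf z * (σ z)⁻¹))
          ((z - z₀) • (Df z)⁻¹ + (Df z)⁻¹ * Cf z * (σ z)⁻¹ * Bf z * (Df z)⁻¹)) l
        (𝓝 (fromBlocks 1 0 0 0)) := by
      have hσinv : Tendsto (fun z => (σ z)⁻¹) l (𝓝 (1 : Matrix (Fin K) (Fin K) ℂ)) := by
        have := tendsto_matinv hσ (by simp)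
        simpa using this
      have hDinv : Tendsto (fun z => (Df z)⁻¹) l (𝓝 D0⁻¹) := tendsto_matinv hDc hD
      have hzt : Tendsto (fun z : ℂ => z - z₀) l (𝓝 0) := by
        have h2 : Tendsto (fun z : ℂ => z - z₀) (𝓝 z₀) (𝓝 (z₀ - z₀)) :=
          (continuous_sub_right z₀).tendsto z₀
        rw [sub_self] at h2
        exact h2.mono_left nhdsWithin_le_nhds
      refine tendsto_fromBlocks hσinv ?_ ?_ ?_
      · have := (tendsto_matmul (tendsto_matmul hσinv hBc) hDinv).neg
        simpa using this
      · have := (tendsto_matmul (tendsto_matmul hDinv hCc) hσinv).neg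
        simpa using this
      · have h1 : Tendsto (fun z => (z - z₀) • (Df z)⁻¹) l (𝓝 ((0 : ℂ) • D0⁻¹)) :=
          hzt.smul hDinv
        have h2 := tendsto_matmul (tendsto_matmul (tendsto_matmul (tendsto_matmul hDinv hCc) hσinv) hBc) hDinv
        have := h1.add h2
        simpa using this
    exact hGlim.congr' (key.mono fun z hz => hz.2.symm)


lemma rank_sum_vecMulVec {n K : ℕ} (q : Fin K → Fin n → ℂ) (hindep : LinearIndependent ℂ q) :
    (∑ m, vecMulVec (q m) (q m)).rank = K := by
  classical
  set C1 : Matrix (Fin n) (Fin K) ℂ := Matrix.of (fun i m => q m i) with hC1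
  have hR : (∑ m, vecMulVec (q m) (q m)) = C1 * C1ᵀ := by
    ext i j
    simp [hC1, Matrix.mul_apply, Matrix.sum_apply, vecMulVec_apply, mul_comm]
  have hmv : ∀ c : Fin K → ℂ, C1.mulVec c = 0 → c = 0 := by
    intro c hc
    have hsum : ∑ m, c m • q m = 0 := by
      ext i
      have := congrFun hc i
      simpa [hC1, Matrix.mulVec, dotProduct, Finset.sum_apply, mul_comm] using this
    funext m
    exact Fintype.linearIndependent_iff.mp hindep c hsum m
  have hker1 : LinearMap.ker C1.mulVecLin = ⊥ := by
    rw [eq_bot_iff]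
    intro c hc
    simp only [LinearMap.mem_ker, Matrix.mulVecLin_apply] at hc
    exact (Submodule.mem_bot _).mpr (hmv c hc)
  have hrankC1 : C1.rank = K := by
    have h := LinearMap.finrank_range_of_inj (LinearMap.ker_eq_bot.mp hker1)
    rw [Matrix.rank, h, Module.finrank_fintype_fun_eq_card, Fintype.card_fin]
  have hkereq : LinearMap.ker (C1 * C1ᵀ).mulVecLin = LinearMap.ker (C1ᵀ).mulVecLin := by
    ext x
    simp only [LinearMap.mem_ker, Matrix.mulVecLin_apply]
    constructor
    · intro h
      apply hmv
      rwa [← Matrix.mulVec_mulVec] at h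
    · intro h
      rw [← Matrix.mulVec_mulVec, h, Matrix.mulVec_zero]
  have h1 := LinearMap.finrank_range_add_finrank_ker (C1 * C1ᵀ).mulVecLin
  have h2 := LinearMap.finrank_range_add_finrank_ker (C1ᵀ).mulVecLin
  rw [hkereq] at h1
  have hT : (C1ᵀ).rank = K := by rw [Matrix.rank_transpose, hrankC1]
  rw [hR]
  have e1 : (C1 * C1ᵀ).rank = Module.finrank ℂ (LinearMap.range (C1 * C1ᵀ).mulVecLin) := rfl
  have e2 : (C1ᵀ).rank = Module.finrank ℂ (LinearMap.range (C1ᵀ).mulVecLin) := rfl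
  omega


/-- **Gohberg–Sigal residue normalization, degenerate semi-simple case.**
If the kernel of the holomorphic complex-symmetric matrix function `M` at `z₀` has
dimension `K ≥ 1` with a basis `q_1,…,q_K` normalized by `q_mᵀ·M'(z₀)·q_{m'} = δ_{m,m'}`,
then `M(z)` is invertible on a punctured neighborhood of `z₀` and
`(z − z₀)·M(z)⁻¹ → Σ_m q_m·q_mᵀ`: a Laurent-order-one pole with a rank-`K` residue. -/
theorem stmt8 (U : Set ℂ) (hU : IsOpen U) (z₀ : ℂ) (hz₀ : z₀ ∈ U) (n K : ℕ) (hK : 1 ≤ K)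
    (M : ℂ → Matrix (Fin n) (Fin n) ℂ)
    (hM : ∀ i j, DifferentiableOn ℂ (fun z => M z i j) U)
    (hsym : ∀ z ∈ U, (M z)ᵀ = M z)
    (M' : Matrix (Fin n) (Fin n) ℂ)
    (hM' : ∀ i j, M' i j = deriv (fun z => M z i j) z₀)
    (q : Fin K → Fin n → ℂ)
    (hindep : LinearIndependent ℂ q)
    (hker : ∀ m, (M z₀).mulVec (q m) = 0)
    (hspan : ∀ v, (M z₀).mulVec v = 0 → ∃ c : Fin K → ℂ, v = ∑ m, c m • q m)
    (hnorm : ∀ m m', q m ⬝ᵥ M'.mulVec (q m') = if m = m' then 1 else 0) :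
    (∀ᶠ z in 𝓝[≠] z₀, IsUnit (M z).det) ∧
      Tendsto (fun z : ℂ => (z - z₀) • (M z)⁻¹) (𝓝[≠] z₀)
        (𝓝 (∑ m, vecMulVec (q m) (q m))) ∧
      (∑ m, vecMulVec (q m) (q m)).rank = K := by
  classical
  set b := Module.Basis.sumExtend hindep with hbdef
  haveI : Fintype (Module.Basis.sumExtendIndex hindep) := by
    haveI := IsNoetherian.fintypeBasisIndex b
    exact Fintype.ofInjective (Sum.inr : _ → Fin K ⊕ Module.Basis.sumExtendIndex hindep) Sum.inr_injective
  set C : Matrix (Fin n) (Fin K ⊕ Module.Basis.sumExtendIndex hindep) ℂ :=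
    (Pi.basisFun ℂ (Fin n)).toMatrix ⇑b with hCdef
  set C' : Matrix (Fin K ⊕ Module.Basis.sumExtendIndex hindep) (Fin n) ℂ :=
    b.toMatrix ⇑(Pi.basisFun ℂ (Fin n)) with hC'def
  have hCC' : C * C' = 1 := Module.Basis.toMatrix_mul_toMatrix_flip _ _
  have hC'C : C' * C = 1 := Module.Basis.toMatrix_mul_toMatrix_flip _ _
  have hCcol : ∀ (j : Fin n) (r : Fin K ⊕ Module.Basis.sumExtendIndex hindep), C j r = b r j := by
    intro j r
    rw [hCdef, Module.Basis.toMatrix_apply, Pi.basisFun_repr]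
  have hbinl : ∀ i : Fin K, b (Sum.inl i) = q i := by
    intro i
    rw [hbdef]
    simp [Module.Basis.sumExtend, Equiv.Set.sumDiffSubset, Module.Basis.extend_apply_self,
      Equiv.Set.union, Equiv.Set.union', Equiv.ofInjective, Equiv.sumCongr, Equiv.ofLeftInverse,
        Equiv.symm_symm, Equiv.trans_apply, Equiv.setCongr_apply]
    rfl
  set T : ℂ → Matrix (Fin K ⊕ Module.Basis.sumExtendIndex hindep) (Fin K ⊕ Module.Basis.sumExtendIndex hindep) ℂ :=
    fun z => Cᵀ * M z * C with hTdef
  have hTentry : ∀ (z : ℂ) (r s), T z r s = b r ⬝ᵥ (M z).mulVec (b s) := by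
    intro z r s
    rw [hTdef]
    simp only [Matrix.mul_apply, transpose_apply, dotProduct, Matrix.mulVec, hCcol,
      Finset.sum_mul, Finset.mul_sum]
    rw [Finset.sum_comm]
    refine Finset.sum_congr rfl fun j _ => Finset.sum_congr rfl fun k _ => by ring
  -- kernel rows/cols vanish at z₀
  have hrow0 : ∀ (i : Fin K) (s), T z₀ (Sum.inl i) s = 0 := by
    intro i s
    rw [hTentry, hbinl, Matrix.dotProduct_mulVec]
    have hv : Matrix.vecMul (q i) (M z₀) = 0 := by
      rw [← hsym z₀ hz₀, Matrix.vecMul_transpose, hker i]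
    rw [hv, zero_dotProduct]
  have hcol0 : ∀ (r) (i : Fin K), T z₀ r (Sum.inl i) = 0 := by
    intro r i
    rw [hTentry, hbinl, hker i, dotProduct_zero]
  -- differentiability and derivatives
  have hMz : ∀ j k, DifferentiableAt ℂ (fun z => M z j k) z₀ := fun j k =>
    (hM j k).differentiableAt (hU.mem_nhds hz₀)
  have hTder : ∀ r s, HasDerivAt (fun z => T z r s) (b r ⬝ᵥ M'.mulVec (b s)) z₀ := by
    intro r s
    have heq : (fun z => T z r s) = fun z => ∑ j, b r j * ∑ k, M z j k * b s k := by
      funext z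
      rw [hTentry]
      simp only [dotProduct, Matrix.mulVec]
    rw [heq]
    have htarget : b r ⬝ᵥ M'.mulVec (b s) = ∑ j, b r j * ∑ k, M' j k * b s k := by
      simp only [dotProduct, Matrix.mulVec]
    rw [htarget]
    apply HasDerivAt.fun_sum
    intro j _
    have : HasDerivAt (fun z => ∑ k, M z j k * b s k) (∑ k, M' j k * b s k) z₀ := by
      apply HasDerivAt.fun_sum
      intro k _
      have hd : HasDerivAt (fun z => M z j k) (M' j k) z₀ := by
        rw [hM' j k]
        exact (hMz j k).hasDerivAt
      exact hd.mul_const (b s k)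
    exact this.const_mul (b r j)
  have hdiffT : ∀ r s, DifferentiableAt ℂ (fun z => T z r s) z₀ := fun r s =>
    (hTder r s).differentiableAt
  have hderT : ∀ i j : Fin K,
      deriv (fun z => T z (Sum.inl i) (Sum.inl j)) z₀ = if i = j then 1 else 0 := by
    intro i j
    rw [(hTder (Sum.inl i) (Sum.inl j)).deriv, hbinl, hbinl, hnorm]
  -- C mulVec is the basis combination
  have hCmulVec : ∀ y, C.mulVec y = ∑ s, y s • (b s : Fin n → ℂ) := by
    intro y
    funext j
    simp only [Matrix.mulVec, dotProduct, hCcol, Finset.sum_apply, Pi.smul_apply, smul_eq_mul]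
    exact Finset.sum_congr rfl fun s _ => mul_comm _ _
  -- Cᵀ mulVec injective
  have hCtinj : ∀ u : Fin n → ℂ, Cᵀ.mulVec u = 0 → u = 0 := by
    intro u hu
    have h1 : (C'ᵀ * Cᵀ) = 1 := by rw [← Matrix.transpose_mul, hCC', Matrix.transpose_one]
    calc u = (C'ᵀ * Cᵀ).mulVec u := by rw [h1, Matrix.one_mulVec]
    _ = C'ᵀ.mulVec (Cᵀ.mulVec u) := by rw [← Matrix.mulVec_mulVec]
    _ = 0 := by rw [hu, Matrix.mulVec_zero]
  -- determinant of lower-right block at z₀ is nonzero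
  have hD0det : ((T z₀).toBlocks₂₂).det ≠ 0 := by
    intro h0
    obtain ⟨x, hx0, hx⟩ := (Matrix.exists_mulVec_eq_zero_iff).mpr h0
    set y : (Fin K ⊕ Module.Basis.sumExtendIndex hindep) → ℂ := Sum.elim 0 x with hy
    have hTy : (T z₀).mulVec y = 0 := by
      funext r
      have hexp : (T z₀).mulVec y r = ∑ i' , T z₀ r (Sum.inr i') * x i' := by
        simp only [Matrix.mulVec, dotProduct, Fintype.sum_sum_type, hy, Sum.elim_inl,
          Sum.elim_inr, Pi.zero_apply, mul_zero, Finset.sum_const_zero, zero_add]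
      cases r with
      | inl i =>
        rw [Pi.zero_apply, hexp]
        exact Finset.sum_eq_zero fun i' _ => by rw [hrow0 i (Sum.inr i'), zero_mul]
      | inr i =>
        rw [Pi.zero_apply, hexp]
        have := congrFun hx i
        simpa [Matrix.mulVec, dotProduct, Matrix.toBlocks₂₂] using this
    set w : Fin n → ℂ := C.mulVec y with hw
    have hMw : (M z₀).mulVec w = 0 := by
      apply hCtinj
      have : (Cᵀ * M z₀ * C).mulVec y = Cᵀ.mulVec ((M z₀).mulVec (C.mulVec y)) := by
        rw [Matrix.mulVec_mulVec, Matrix.mulVec_mulVec, Matrix.mul_assoc]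
      rw [hw, ← this]
      exact hTy
    obtain ⟨c, hc⟩ := hspan w hMw
    obtain ⟨i₀, hi₀⟩ := Function.ne_iff.mp hx0
    have hrepr1 : ⇑(b.repr w) = y := by
      have hweq : w = ∑ s, y s • (b s : Fin n → ℂ) := hCmulVec y
      rw [hweq]
      exact b.repr_sum_self y
    have hw2 : w = ∑ s, (Sum.elim c 0 s) • (b s : Fin n → ℂ) := by
      rw [hc, Fintype.sum_sum_type]
      simp [hbinl]
    have hrepr2 : ⇑(b.repr w) = Sum.elim c 0 := by
      rw [hw2]
      exact b.repr_sum_self _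
    have hy2 : y = Sum.elim c 0 := by rw [← hrepr1, hrepr2]
    have : x i₀ = 0 := by
      have := congrFun hy2 (Sum.inr i₀)
      simpa [hy] using this
    exact hi₀ this
  -- conjugation transfer
  have hevTlim : True := trivial
  have hconj : ∀ᶠ z in 𝓝[≠] z₀, IsUnit (T z).det →
      (IsUnit (M z).det ∧ (M z)⁻¹ = C * (T z)⁻¹ * Cᵀ) := by
    filter_upwards with z hz
    have h1 : C'ᵀ * Cᵀ = 1 := by rw [← Matrix.transpose_mul, hCC', Matrix.transpose_one]
    have hM_eq : M z = C'ᵀ * T z * C' := by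
      rw [hTdef]
      simp only [← Matrix.mul_assoc]
      rw [h1, Matrix.one_mul, Matrix.mul_assoc, hCC', Matrix.mul_one]
    have hTinv : T z * (T z)⁻¹ = 1 := Matrix.mul_nonsing_inv _ hz
    have hright : M z * (C * (T z)⁻¹ * Cᵀ) = 1 := by
      rw [hM_eq]
      simp only [Matrix.mul_assoc]
      rw [← Matrix.mul_assoc C' C, hC'C, Matrix.one_mul,
        ← Matrix.mul_assoc (T z) ((T z)⁻¹), hTinv, Matrix.one_mul]
      exact h1
    exact ⟨Matrix.isUnit_det_of_right_inverse hright, Matrix.inv_eq_right_inv hright⟩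
  set E1 : Matrix (Fin K ⊕ Module.Basis.sumExtendIndex hindep) (Fin K ⊕ Module.Basis.sumExtendIndex hindep) ℂ :=
    fromBlocks 1 0 0 0 with hE1
  have hfinal_mat : C * E1 * Cᵀ = ∑ m, vecMulVec (q m) (q m) := by
    ext i j
    have hCE : ∀ s, (C * E1) i s = Sum.elim (fun m => q m i) 0 s := by
      intro s
      cases s with
      | inl m' =>
        simp only [Matrix.mul_apply, hE1, Fintype.sum_sum_type, Sum.elim_inl,
          fromBlocks_apply₁₁, fromBlocks_apply₂₁, Matrix.zero_apply, mul_zero,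
          Finset.sum_const_zero, add_zero, Matrix.one_apply, mul_ite, mul_one]
        rw [Finset.sum_ite_eq' Finset.univ m' (fun m => C i (Sum.inl m))]
        simp [hCcol, hbinl]
      | inr s' =>
        simp only [Matrix.mul_apply, hE1, Fintype.sum_sum_type, Sum.elim_inr,
          fromBlocks_apply₁₂, fromBlocks_apply₂₂, Matrix.zero_apply, mul_zero,
          Finset.sum_const_zero, add_zero, Pi.zero_apply]
    rw [Matrix.mul_apply]
    simp only [transpose_apply, hCE]
    rw [Fintype.sum_sum_type]
    simp only [Sum.elim_inl, Sum.elim_inr, Pi.zero_apply, zero_mul,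
      Finset.sum_const_zero, add_zero, Matrix.sum_apply, vecMulVec_apply, hCcol, hbinl]
  obtain ⟨hev, hlim⟩ := core T z₀ hdiffT hrow0 hcol0 hderT hD0det
  have hMev : ∀ᶠ z in 𝓝[≠] z₀, IsUnit (M z).det ∧ (M z)⁻¹ = C * (T z)⁻¹ * Cᵀ := by
    filter_upwards [hev, hconj] with z h1 h2
    exact h2 h1
  refine ⟨hMev.mono fun z hz => hz.1, ?_, rank_sum_vecMulVec q hindep⟩
  have hsmul_eq : ∀ᶠ z in 𝓝[≠] z₀,
      C * ((z - z₀) • (T z)⁻¹) * Cᵀ = (z - z₀) • (M z)⁻¹ := by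
    filter_upwards [hMev] with z hz
    rw [hz.2, Matrix.mul_smul, Matrix.smul_mul, Matrix.mul_assoc]
  have hlim2 : Tendsto (fun z => C * ((z - z₀) • (T z)⁻¹) * Cᵀ) (𝓝[≠] z₀)
      (𝓝 (C * E1 * Cᵀ)) :=
    tendsto_matmul (tendsto_matmul tendsto_const_nhds hlim) tendsto_const_nhds
  rw [← hfinal_mat]
  exact Filter.Tendsto.congr' hsmul_eq hlim2
end

section
/- (Semi-simplicity criterion.) Suppose M(z₀) is singular and det(M(z)) is not identically zero near z₀, so det(M(z)) has a zero of some finite order at z₀. Then the order of this zero equals dim ker M(z₀) (i.e., the algebraic multiplicity equals the geometric multiplicity, so the pole of M(z)⁻¹ at z₀ has Laurent order one) if and only if for every nonzero v ∈ ker M(z₀) there exists w ∈ ker M(z₀) with vᵀ·M'(z₀)·w ≠ 0. -/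
open Matrix Topology Filter

private lemma aux_ord_lt {z₀ : ℂ} {a b : ℕ} {φ ψ : ℂ → ℂ}
    (hφ : ContinuousAt φ z₀) (hψ : ContinuousAt ψ z₀) (hab : a < b)
    (heq : ∀ᶠ z in 𝓝 z₀, (z - z₀) ^ a * φ z = (z - z₀) ^ b * ψ z) :
    φ z₀ = 0 := by
  have h1 : ∀ᶠ z in 𝓝[≠] z₀, φ z = (z - z₀) ^ (b - a) * ψ z := by
    filter_upwards [heq.filter_mono nhdsWithin_le_nhds, self_mem_nhdsWithin] with z hz hz'
    have hz0 : (z - z₀) ≠ 0 := sub_ne_zero.2 hz'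
    refine mul_left_cancel₀ (pow_ne_zero a hz0) ?_
    rw [hz, ← mul_assoc, ← pow_add]
    congr 2
    omega
  have t1 : Tendsto φ (𝓝[≠] z₀) (𝓝 (φ z₀)) := hφ.continuousWithinAt.tendsto
  have t2 : Tendsto (fun z => (z - z₀) ^ (b - a) * ψ z) (𝓝[≠] z₀) (𝓝 0) := by
    have hc : ContinuousAt (fun z => (z - z₀) ^ (b - a) * ψ z) z₀ :=
      (((continuous_id.sub continuous_const).pow _).continuousAt).mul hψ
    have hv : (fun z => (z - z₀) ^ (b - a) * ψ z) z₀ = 0 := by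
      simp [Nat.sub_ne_zero_of_lt hab, zero_pow]
    have h2 := hc.continuousWithinAt (s := {z₀}ᶜ)
    rw [ContinuousWithinAt] at h2
    convert h2 using 2
    simp [zero_pow (Nat.sub_ne_zero_of_lt hab)]
  have := tendsto_nhds_unique (t1.congr' h1) t2
  exact this

private lemma aux_ord_eq {z₀ : ℂ} {a : ℕ} {φ ψ : ℂ → ℂ}
    (hφ : ContinuousAt φ z₀) (hψ : ContinuousAt ψ z₀)
    (heq : ∀ᶠ z in 𝓝 z₀, (z - z₀) ^ a * φ z = (z - z₀) ^ a * ψ z) :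
    φ z₀ = ψ z₀ := by
  have h1 : ∀ᶠ z in 𝓝[≠] z₀, φ z = ψ z := by
    filter_upwards [heq.filter_mono nhdsWithin_le_nhds, self_mem_nhdsWithin] with z hz hz'
    exact mul_left_cancel₀ (pow_ne_zero a (sub_ne_zero.2 hz')) hz
  exact tendsto_nhds_unique (hφ.continuousWithinAt.tendsto.congr' h1)
    (hψ.continuousWithinAt.tendsto (s := {z₀}ᶜ))

private lemma aux_ord_iff {z₀ : ℂ} {a b : ℕ} {φ ψ : ℂ → ℂ}
    (hφ : ContinuousAt φ z₀) (hψ : ContinuousAt ψ z₀) (hφ0 : φ z₀ ≠ 0)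
    (heq : ∀ᶠ z in 𝓝 z₀, (z - z₀) ^ a * φ z = (z - z₀) ^ b * ψ z) :
    a = b ↔ ψ z₀ ≠ 0 := by
  constructor
  · rintro rfl
    rw [← aux_ord_eq hφ hψ heq]
    exact hφ0
  · intro hψ0
    rcases lt_trichotomy a b with h | h | h
    · exact absurd (aux_ord_lt hφ hψ h heq) hφ0
    · exact h
    · exact absurd (aux_ord_lt hψ hφ h (heq.mono fun z hz => hz.symm)) hψ0

private lemma aux_det_analytic {ι : Type*} [Fintype ι] [DecidableEq ι] {z₀ : ℂ}
    {A : ℂ → Matrix ι ι ℂ} (h : ∀ i j, AnalyticAt ℂ (fun z => A z i j) z₀) :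
    AnalyticAt ℂ (fun z => (A z).det) z₀ := by
  have : (fun z => (A z).det)
      = fun z => ∑ σ : Equiv.Perm ι, ((Equiv.Perm.sign σ : ℤ) : ℂ) * ∏ i, A z (σ i) i := by
    funext z
    rw [Matrix.det_apply]
    congr 1
    funext σ
    simp [Units.smul_def, zsmul_eq_mul]
  rw [this]
  exact Finset.analyticAt_fun_sum _ fun σ _ =>
    analyticAt_const.mul (Finset.analyticAt_fun_prod _ fun i _ => h _ _)

private lemma aux_dslope_analytic {f : ℂ → ℂ} {z₀ : ℂ} (hf : AnalyticAt ℂ f z₀) :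
    AnalyticAt ℂ (dslope f z₀) z₀ := by
  rcases hf with ⟨p, hp⟩
  exact ⟨p.fslope, hp.has_fpower_series_dslope_fslope⟩

private lemma aux_dot_symm {n : ℕ} {A : Matrix (Fin n) (Fin n) ℂ} (hA : Aᵀ = A)
    (v w : Fin n → ℂ) : v ⬝ᵥ A.mulVec w = w ⬝ᵥ A.mulVec v := by
  rw [Matrix.dotProduct_mulVec, ← hA, Matrix.vecMul_transpose, hA, dotProduct_comm]


/-- **Semi-simplicity criterion.** Let `M` be holomorphic and
complex-symmetric near `z₀`, with `M(z₀)` singular, and suppose `det M(z)` has a zero of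
finite order `k` at `z₀` (i.e. `det M(z) = (z − z₀)^k·g(z)` with `g` analytic,
`g(z₀) ≠ 0`). Then `k = dim ker M(z₀)` (algebraic = geometric multiplicity, Laurent
order one pole of `M(z)⁻¹`) iff for every nonzero `v ∈ ker M(z₀)` there exists
`w ∈ ker M(z₀)` with `vᵀ·M'(z₀)·w ≠ 0`. -/
theorem stmt9 (U : Set ℂ) (hU : IsOpen U) (z₀ : ℂ) (hz₀ : z₀ ∈ U) (n : ℕ)
    (M : ℂ → Matrix (Fin n) (Fin n) ℂ)
    (hM : ∀ i j, DifferentiableOn ℂ (fun z => M z i j) U)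
    (hsym : ∀ z ∈ U, (M z)ᵀ = M z)
    (M' : Matrix (Fin n) (Fin n) ℂ)
    (hM' : ∀ i j, M' i j = deriv (fun z => M z i j) z₀)
    (hsing : (M z₀).det = 0)
    (k : ℕ) (g : ℂ → ℂ) (hg : AnalyticAt ℂ g z₀) (hg0 : g z₀ ≠ 0)
    (hfac : ∀ᶠ z in 𝓝 z₀, (M z).det = (z - z₀) ^ k * g z) :
    k = Module.finrank ℂ (LinearMap.ker (M z₀).mulVecLin) ↔
      ∀ v : Fin n → ℂ, (M z₀).mulVec v = 0 → v ≠ 0 →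
        ∃ w : Fin n → ℂ, (M z₀).mulVec w = 0 ∧ v ⬝ᵥ M'.mulVec w ≠ 0 := by
  classical
  set K : Submodule ℂ (Fin n → ℂ) := LinearMap.ker (M z₀).mulVecLin with hKdef
  have hKmem : ∀ v : Fin n → ℂ, v ∈ K ↔ (M z₀).mulVec v = 0 := by
    intro v; rw [hKdef, LinearMap.mem_ker, Matrix.mulVecLin_apply]
  obtain ⟨K', hcompl⟩ := Submodule.exists_isCompl K
  set r := Module.finrank ℂ K with hrdef
  set s := Module.finrank ℂ K' with hsdef
  have hrs : r + s = n := by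
    have h1 := Submodule.finrank_add_eq_of_isCompl hcompl
    rwa [Module.finrank_fin_fun] at h1
  -- analyticity of entries
  have hMA : ∀ i j, AnalyticAt ℂ (fun z => M z i j) z₀ :=
    fun i j => (hM i j).analyticAt (hU.mem_nhds hz₀)
  have hMD : ∀ i j, DifferentiableAt ℂ (fun z => M z i j) z₀ :=
    fun i j => (hM i j).differentiableAt (hU.mem_nhds hz₀)
  -- symmetry facts
  have hM0sym : (M z₀)ᵀ = M z₀ := hsym z₀ hz₀
  have hM'sym : M'ᵀ = M' := by
    ext i j
    show M' j i = M' i j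
    rw [hM' i j, hM' j i]
    apply Filter.EventuallyEq.deriv_eq
    filter_upwards [hU.mem_nhds hz₀] with z hz
    show M z j i = M z i j
    conv_rhs => rw [← hsym z hz]
    rfl
  -- bases
  let bK : Module.Basis (Fin r) ℂ K := Module.finBasis ℂ K
  let bK' : Module.Basis (Fin s) ℂ K' := Module.finBasis ℂ K'
  let b : Module.Basis (Fin r ⊕ Fin s) ℂ (Fin n → ℂ) :=
    (bK.prod bK').map (Submodule.prodEquivOfIsCompl K K' hcompl)
  have hbl : ∀ a : Fin r, b (Sum.inl a) = (bK a : Fin n → ℂ) := by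
    intro a
    show (Submodule.prodEquivOfIsCompl K K' hcompl) ((bK.prod bK') (Sum.inl a)) = _
    rw [Submodule.coe_prodEquivOfIsCompl']
    have h1 : ((bK.prod bK') (Sum.inl a)).1 = bK a := Module.Basis.prod_apply_inl_fst _ _ _
    have h2 : ((bK.prod bK') (Sum.inl a)).2 = 0 := Module.Basis.prod_apply_inl_snd _ _ _
    rw [h1, h2]
    simp
  have hbr : ∀ a : Fin s, b (Sum.inr a) = (bK' a : Fin n → ℂ) := by
    intro a
    show (Submodule.prodEquivOfIsCompl K K' hcompl) ((bK.prod bK') (Sum.inr a)) = _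
    rw [Submodule.coe_prodEquivOfIsCompl']
    have h1 : ((bK.prod bK') (Sum.inr a)).1 = 0 := Module.Basis.prod_apply_inr_fst _ _ _
    have h2 : ((bK.prod bK') (Sum.inr a)).2 = bK' a := Module.Basis.prod_apply_inr_snd _ _ _
    rw [h1, h2]
    simp
  have hblK : ∀ a : Fin r, b (Sum.inl a) ∈ K := fun a => by rw [hbl a]; exact (bK a).2
  have hbrK' : ∀ a : Fin s, b (Sum.inr a) ∈ K' := fun a => by rw [hbr a]; exact (bK' a).2
  have hblv : ∀ a : Fin r, (M z₀).mulVec (b (Sum.inl a)) = 0 :=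
    fun a => (hKmem _).mp (hblK a)
  -- the index equivalence
  have hcard : Fintype.card (Fin r ⊕ Fin s) = Fintype.card (Fin n) := by
    simp [hrs]
  let e : (Fin r ⊕ Fin s) ≃ Fin n := Fintype.equivOfCardEq hcard
  -- matrices
  set P : Matrix (Fin r ⊕ Fin s) (Fin r ⊕ Fin s) ℂ :=
    Matrix.of fun i j => b j (e i) with hPdef
  have hPdet : P.det ≠ 0 := by
    intro h0
    obtain ⟨x, hx0, hx⟩ := Matrix.exists_mulVec_eq_zero_iff.mpr h0
    have hsum : ∑ j, x j • b j = 0 := by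
      funext m
      have h1 := congrFun hx (e.symm m)
      simp only [Matrix.mulVec, dotProduct, hPdef, Matrix.of_apply,
        Equiv.apply_symm_apply, Pi.zero_apply] at h1
      simp only [Finset.sum_apply, Pi.smul_apply, smul_eq_mul, Pi.zero_apply]
      rw [← h1]
      exact Finset.sum_congr rfl fun j _ => mul_comm _ _
    have := Fintype.linearIndependent_iff.mp b.linearIndependent x hsum
    exact hx0 (funext this)
  -- the rescaled matrix family
  set Fm : ℂ → Matrix (Fin r ⊕ Fin s) (Fin r ⊕ Fin s) ℂ := fun z =>
    Matrix.of fun i j =>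
      Sum.elim (fun a => dslope (fun w => (M w).mulVec (b (Sum.inl a)) (e i)) z₀ z)
        (fun a => (M z).mulVec (b (Sum.inr a)) (e i)) j with hFmdef
  set h : ℂ → ℂ := fun z => (Fm z).det with hhdef
  -- G z = M z (in new coords) * P  and its factorization
  have hGF : ∀ z : ℂ, (M z).det * P.det = (z - z₀) ^ r * h z := by
    intro z
    have hG : ((M z).submatrix e e * P) =
        Matrix.of fun i j =>
          (Sum.elim (fun _ : Fin r => z - z₀) (fun _ : Fin s => (1:ℂ)) j) * Fm z i j := by
      ext i j
      have hmv : ((M z).submatrix e e * P) i j = (M z).mulVec (b j) (e i) := by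
        simp only [Matrix.mul_apply, Matrix.submatrix_apply, hPdef, Matrix.of_apply,
          Matrix.mulVec, dotProduct]
        exact Fintype.sum_equiv e _ _ fun l => rfl
      rw [hmv]
      cases j with
      | inl a =>
        have hf0 : (M z₀).mulVec (b (Sum.inl a)) (e i) = 0 := by rw [hblv a]; rfl
        have := sub_smul_dslope (fun w => (M w).mulVec (b (Sum.inl a)) (e i)) z₀ z
        simp only [smul_eq_mul, hf0, sub_zero] at this
        simp only [Matrix.of_apply, Sum.elim_inl, hFmdef]
        rw [← this]
      | inr a =>
        simp [hFmdef]
    have hdet1 : (M z).det * P.det = ((M z).submatrix e e * P).det := by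
      rw [Matrix.det_mul, Matrix.det_submatrix_equiv_self]
    rw [hdet1, hG, Matrix.det_mul_row]
    congr 1
    rw [Fintype.prod_sum_type]
    simp [Finset.prod_const]
  -- analyticity of h
  have hmvA : ∀ (v : Fin n → ℂ) (i : Fin n), AnalyticAt ℂ (fun z => (M z).mulVec v i) z₀ := by
    intro v i
    have : (fun z => (M z).mulVec v i) = fun z => ∑ m, M z i m * v m := by
      funext z; simp [Matrix.mulVec, dotProduct]
    rw [this]
    exact Finset.analyticAt_fun_sum _ fun m _ => (hMA i m).mul analyticAt_const
  have hhA : AnalyticAt ℂ h z₀ := by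
    apply aux_det_analytic
    intro i j
    cases j with
    | inl a =>
      exact aux_dslope_analytic (hmvA (b (Sum.inl a)) (e i))
    | inr a =>
      exact hmvA (b (Sum.inr a)) (e i)
  -- deriv computation: Fm z₀ entries
  have hderiv : ∀ (v : Fin n → ℂ) (i : Fin n),
      deriv (fun z => (M z).mulVec v i) z₀ = M'.mulVec v i := by
    intro v i
    have h1 : HasDerivAt (fun z => (M z).mulVec v i) (M'.mulVec v i) z₀ := by
      have h2 : (fun z => (M z).mulVec v i) = fun z => ∑ m, M z i m * v m := by
        funext z; simp [Matrix.mulVec, dotProduct]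
      rw [h2]
      have h3 : M'.mulVec v i = ∑ m, M' i m * v m := by
        simp [Matrix.mulVec, dotProduct]
      rw [h3]
      apply HasDerivAt.fun_sum
      intro m _
      have h4 : HasDerivAt (fun z => M z i m) (M' i m) z₀ := by
        rw [hM' i m]
        exact (hMD i m).hasDerivAt
      exact h4.mul_const (v m)
    exact h1.deriv
  have hE1 : ∀ i (a : Fin r), Fm z₀ i (Sum.inl a) = M'.mulVec (b (Sum.inl a)) (e i) := by
    intro i a
    simp only [hFmdef, Matrix.of_apply, Sum.elim_inl, dslope_same]
    exact hderiv _ _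
  have hE2 : ∀ i (a : Fin s), Fm z₀ i (Sum.inr a) = (M z₀).mulVec (b (Sum.inr a)) (e i) :=
    fun i a => rfl
  -- the  order equivalence
  have hkey : k = r ↔ h z₀ ≠ 0 := by
    apply aux_ord_iff (hg.continuousAt.mul continuousAt_const) hhA.continuousAt
      (mul_ne_zero hg0 hPdet)
    filter_upwards [hfac] with z hz
    show (z - z₀) ^ k * (g z * P.det) = _
    rw [← mul_assoc, ← hz]
    exact hGF z
  rw [hkey]
  -- final equivalence: h z₀ ≠ 0 ↔ nondegeneracy
  constructor
  · -- h z₀ ≠ 0 → nondegeneracy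
    intro hh0 v hv hv0
    by_contra hcon
    push_neg at hcon
    -- v annihilates all columns of Fm z₀
    have hy : ∀ j, (∑ i, (Fm z₀)ᵀ j i * v (e i)) = 0 := by
      intro j
      have hswap : ∑ i, (Fm z₀)ᵀ j i * v (e i) = ∑ i, v (e i) * Fm z₀ i j :=
        Finset.sum_congr rfl fun i _ => by rw [Matrix.transpose_apply, mul_comm]
      rw [hswap]
      cases j with
      | inl a =>
        have : ∑ i, v (e i) * Fm z₀ i (Sum.inl a) = v ⬝ᵥ M'.mulVec (b (Sum.inl a)) := by
          simp only [dotProduct]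
          refine (Fintype.sum_equiv e _ _ fun i => ?_)
          rw [hE1]
        rw [this]
        exact hcon (b (Sum.inl a)) (hblv a)
      | inr a =>
        have : ∑ i, v (e i) * Fm z₀ i (Sum.inr a) = v ⬝ᵥ (M z₀).mulVec (b (Sum.inr a)) := by
          simp only [dotProduct]
          refine (Fintype.sum_equiv e _ _ fun i => ?_)
          rw [hE2]
        rw [this, aux_dot_symm hM0sym, hv]
        simp
    have hy0 : (fun i => v (e i)) ≠ 0 := by
      intro h0
      apply hv0
      funext m
      have := congrFun h0 (e.symm m)
      simpa using this
    have : ((Fm z₀)ᵀ).det = 0 := by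
      rw [← Matrix.exists_mulVec_eq_zero_iff]
      refine ⟨fun i => v (e i), hy0, ?_⟩
      funext j
      simpa [Matrix.mulVec, dotProduct] using hy j
    rw [Matrix.det_transpose] at this
    exact hh0 this
  · -- nondegeneracy → h z₀ ≠ 0
    intro hnd hh0
    obtain ⟨x, hx0, hx⟩ := Matrix.exists_mulVec_eq_zero_iff.mpr hh0
    set u : Fin n → ℂ := ∑ a : Fin r, x (Sum.inl a) • b (Sum.inl a) with hudef
    set q : Fin n → ℂ := ∑ a : Fin s, x (Sum.inr a) • b (Sum.inr a) with hqdef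
    have huK : u ∈ K := Submodule.sum_mem _ fun a _ => Submodule.smul_mem _ _ (hblK a)
    have hqK' : q ∈ K' := Submodule.sum_mem _ fun a _ => Submodule.smul_mem _ _ (hbrK' a)
    have hrel : M'.mulVec u + (M z₀).mulVec q = 0 := by
      funext m
      have h1 := congrFun hx (e.symm m)
      simp only [Matrix.mulVec, dotProduct, Pi.zero_apply] at h1
      rw [Fintype.sum_sum_type] at h1
      -- compute each piece
      have hA : ∑ m', M' m m' * u m' = ∑ a : Fin r, Fm z₀ (e.symm m) (Sum.inl a) * x (Sum.inl a) := by
        simp only [hudef, Finset.sum_apply, Pi.smul_apply, smul_eq_mul, Finset.mul_sum]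
        rw [Finset.sum_comm]
        refine Finset.sum_congr rfl fun a _ => ?_
        rw [hE1, Equiv.apply_symm_apply]
        simp only [Matrix.mulVec, dotProduct, Finset.sum_mul]
        exact Finset.sum_congr rfl fun m' _ => by ring
      have hB : ∑ m', M z₀ m m' * q m' = ∑ a : Fin s, Fm z₀ (e.symm m) (Sum.inr a) * x (Sum.inr a) := by
        simp only [hqdef, Finset.sum_apply, Pi.smul_apply, smul_eq_mul, Finset.mul_sum]
        rw [Finset.sum_comm]
        refine Finset.sum_congr rfl fun a _ => ?_
        rw [hE2, Equiv.apply_symm_apply]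
        simp only [Matrix.mulVec, dotProduct, Finset.sum_mul]
        exact Finset.sum_congr rfl fun m' _ => by ring
      show (M'.mulVec u) m + ((M z₀).mulVec q) m = 0
      simp only [Matrix.mulVec, dotProduct]
      rw [hA, hB, ← h1]
    have hu0 : u = 0 := by
      by_contra hu0
      obtain ⟨w, hwK, hwne⟩ := hnd u ((hKmem u).mp huK) hu0
      apply hwne
      rw [aux_dot_symm hM'sym]
      have h5 : M'.mulVec u = -(M z₀).mulVec q := by
        rw [eq_neg_iff_add_eq_zero]; exact hrel
      rw [h5]
      rw [dotProduct_neg, aux_dot_symm hM0sym, hwK]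
      simp
    have hq0 : q = 0 := by
      have hqK : q ∈ K := by
        rw [hKmem]
        have := hrel
        rw [hu0] at this
        simpa using this
      exact Submodule.disjoint_def.mp hcompl.disjoint q hqK hqK'
    have hxz : ∀ j, x j = 0 := by
      apply Fintype.linearIndependent_iff.mp b.linearIndependent
      rw [Fintype.sum_sum_type]
      rw [← hudef, ← hqdef, hu0, hq0]
      simp
    exact hx0 (funext hxz)
end

section
/- The two R-matrix forms of the scattering matrix agree: O⁻¹·(1 + Q·S·Q⁻¹·D)·I = I·(1 + D·Q⁻¹·S·Q)·O⁻¹, and this common matrix U is complex-symmetric: Uᵀ = U. -/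
open Matrix

private lemma diag_inv {n : ℕ} (v : Fin n → ℂ) (hv : ∀ i, v i ≠ 0) :
    (diagonal v)⁻¹ = diagonal (fun i => (v i)⁻¹) := by
  apply inv_eq_right_inv
  rw [diagonal_mul_diagonal]
  convert diagonal_one with i
  exact mul_inv_cancel₀ (hv i)

set_option maxHeartbeats 1000000 in
/-- The two R-matrix forms of the scattering matrix agree,
`O⁻¹·(1 + Q·S·Q⁻¹·D)·I = I·(1 + D·Q⁻¹·S·Q)·O⁻¹`, and this common matrix `U` is
complex-symmetric: `Uᵀ = U`. Here `O, I, Q` are diagonal invertible, `D = 2i·Q²·(O·I)⁻¹`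
is the diagonal Wronskian matrix, and `S` (the Kapur–Peierls operator) is symmetric. -/
theorem stmt10 (n : ℕ) (Om Iw Q D S : Matrix (Fin n) (Fin n) ℂ)
    (hOd : Om.IsDiag) (hId : Iw.IsDiag) (hQd : Q.IsDiag)
    (hOu : IsUnit Om.det) (hIu : IsUnit Iw.det) (hQu : IsUnit Q.det)
    (hD : D = (2 * Complex.I) • (Q ^ 2 * (Om * Iw)⁻¹))
    (hS : Sᵀ = S) :
    Om⁻¹ * (1 + Q * S * Q⁻¹ * D) * Iw = Iw * (1 + D * Q⁻¹ * S * Q) * Om⁻¹ ∧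
      (Om⁻¹ * (1 + Q * S * Q⁻¹ * D) * Iw)ᵀ = Om⁻¹ * (1 + Q * S * Q⁻¹ * D) * Iw := by
  have key : ∀ (M : Matrix (Fin n) (Fin n) ℂ), M.IsDiag → IsUnit M.det →
      ∀ i, M i i ≠ 0 := by
    intro M hMd hMu i
    rw [← hMd.diagonal_diag, det_diagonal] at hMu
    rw [isUnit_iff_ne_zero, Finset.prod_ne_zero_iff] at hMu
    exact hMu i (Finset.mem_univ i)
  have hO0 := key Om hOd hOu
  have hI0 := key Iw hId hIu
  have hQ0 := key Q hQd hQu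
  have hOm : Om = diagonal (fun i => Om i i) := hOd.diagonal_diag.symm
  have hIm : Iw = diagonal (fun i => Iw i i) := hId.diagonal_diag.symm
  have hQm : Q = diagonal (fun i => Q i i) := hQd.diagonal_diag.symm
  rw [hD, hOm, hIm, hQm, diagonal_mul_diagonal,
    diag_inv _ hO0, diag_inv _ hQ0,
    diag_inv _ (fun i => mul_ne_zero (hO0 i) (hI0 i))]
  constructor
  · ext i j
    simp only [Matrix.add_mul, Matrix.mul_add, Matrix.mul_one, Matrix.one_mul,
      Matrix.smul_mul, Matrix.mul_smul, Matrix.mul_assoc, pow_two,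
      diagonal_mul_diagonal, Matrix.add_apply, Matrix.smul_apply, diagonal_mul,
      mul_diagonal, diagonal_apply, smul_eq_mul]
    by_cases h : i = j
    · subst h
      simp only [if_pos rfl, eq_self_iff_true, if_true]
      field_simp [hO0 i, hI0 i, hQ0 i]
    · simp only [if_neg h]
      field_simp [hO0 i, hI0 i, hQ0 i, hO0 j, hI0 j, hQ0 j]
      ring
  · ext i j
    have hSij : S j i = S i j := congrFun (congrFun hS i) j
    simp only [transpose_apply, Matrix.add_mul, Matrix.mul_add, Matrix.mul_one,
      Matrix.one_mul, Matrix.smul_mul, Matrix.mul_smul, Matrix.mul_assoc, pow_two,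
      diagonal_mul_diagonal, Matrix.add_apply, Matrix.smul_apply, diagonal_mul,
      mul_diagonal, diagonal_apply, smul_eq_mul, hSij]
    by_cases h : i = j
    · subst h
      simp only [if_pos rfl, if_true]
      ring
    · have h' : ¬ j = i := fun hh => h hh.symm
      simp only [h, h', if_false]
      field_simp [hO0 i, hI0 i, hQ0 i, hO0 j, hI0 j, hQ0 j]
      ring
end

section
/- (Specular symmetry of the radioactive poles.) The level determinant satisfies the functional equation conj( det A⁻¹(−conj k) ) = det A⁻¹(k) for every k ∈ ℂ. Consequently, if k₀ is a radioactive pole (det A⁻¹(k₀) = 0), then so is −conj(k₀): det A⁻¹(−conj k₀) = 0. -/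
open Matrix

/-- **Specular symmetry of the radioactive poles.** If each channel's
analytically continued reduced logarithmic derivative satisfies
`conj(L_c(−conj z)) = L_c(z)`, then the level determinant satisfies
`conj(det A⁻¹(−conj k)) = det A⁻¹(k)`; consequently if `k₀` is a radioactive pole
(`det A⁻¹(k₀) = 0`) then so is `−conj k₀`. -/
theorem stmt14 (N m : ℕ) (e : Fin N → ℝ) (γ : Matrix (Fin N) (Fin m) ℝ)
    (B : Fin m → ℝ) (a : Fin m → ℝ) (t : ℝ)
    (L : Fin m → ℂ → ℂ)
    (hLc : ∀ c (z : ℂ), starRingEnd ℂ (L c (-(starRingEnd ℂ z))) = L c z)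
    (Ainv : ℂ → Matrix (Fin N) (Fin N) ℂ)
    (hAinv : ∀ k : ℂ, Ainv k =
      Matrix.diagonal (fun lam => (e lam : ℂ)) - ((t : ℂ) * k ^ 2) • (1 : Matrix (Fin N) (Fin N) ℂ)
        - (γ.map ((↑) : ℝ → ℂ)) *
            Matrix.diagonal (fun c => L c ((a c : ℂ) * k) - (B c : ℂ)) *
            (γ.map ((↑) : ℝ → ℂ))ᵀ) :
    (∀ k : ℂ, starRingEnd ℂ ((Ainv (-(starRingEnd ℂ k))).det) = (Ainv k).det) ∧
      ∀ k₀ : ℂ, (Ainv k₀).det = 0 → (Ainv (-(starRingEnd ℂ k₀))).det = 0 := by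
  have key : ∀ k : ℂ, ((Ainv (-(starRingEnd ℂ k))).map (starRingEnd ℂ)) = Ainv k := by
    intro k
    have hz : ∀ c : Fin m, starRingEnd ℂ (L c (-((a c : ℂ) * starRingEnd ℂ k))) = L c ((a c : ℂ) * k) := by
      intro c
      rw [show -((a c : ℂ) * starRingEnd ℂ k) = -(starRingEnd ℂ ((a c : ℂ) * k)) by
        simp [Complex.conj_ofReal], hLc]
    ext i j
    rw [hAinv, hAinv]
    simp only [Matrix.map_apply, Matrix.sub_apply, Matrix.smul_apply, Matrix.mul_apply,
      Matrix.diagonal_apply, Matrix.transpose_apply, Matrix.one_apply, map_sub, map_sum, _root_.map_mul, smul_eq_mul,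
      hz, hLc, map_pow, map_neg, Complex.conj_conj, Complex.conj_ofReal, apply_ite (starRingEnd ℂ),
      map_zero, _root_.map_one, neg_sq, neg_neg]
    ring_nf
    simp [hz]
    simp only [mul_comm k]
  have main : ∀ k : ℂ, starRingEnd ℂ ((Ainv (-(starRingEnd ℂ k))).det) = (Ainv k).det := by
    intro k
    rw [RingHom.map_det, RingHom.mapMatrix_apply, key]
  exact ⟨main, fun k₀ h => by
    have := main k₀
    rw [h] at this
    simpa using congrArg (starRingEnd ℂ) this⟩
end

section
/- If G and G⁻¹ − γ·Λ·γᵀ are invertible, then 1 − R·Λ is invertible and the Kapur–Peierls operator equals its level-matrix form: (1 − R·Λ)⁻¹ · R = γᵀ · (G⁻¹ − γ·Λ·γᵀ)⁻¹ · γ, i.e. R_L = γᵀ·A·γ. -/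
open Matrix

/-- With `R = γᵀ·G·γ` the R-matrix, `A⁻¹ = G⁻¹ − γ·Λ·γᵀ` the inverse
level matrix: if `G` and `G⁻¹ − γ·Λ·γᵀ` are invertible, then `1 − R·Λ` is invertible and
the Kapur–Peierls operator equals its level-matrix form:
`(1 − R·Λ)⁻¹·R = γᵀ·(G⁻¹ − γ·Λ·γᵀ)⁻¹·γ`, i.e. `R_L = γᵀ·A·γ`. -/
theorem stmt18 (N m : ℕ) (G : Matrix (Fin N) (Fin N) ℂ)
    (γ : Matrix (Fin N) (Fin m) ℂ) (Λ : Matrix (Fin m) (Fin m) ℂ)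
    (hG : IsUnit G.det) (hA : IsUnit (G⁻¹ - γ * Λ * γᵀ).det) :
    IsUnit (1 - (γᵀ * G * γ) * Λ).det ∧
      (1 - (γᵀ * G * γ) * Λ)⁻¹ * (γᵀ * G * γ) = γᵀ * (G⁻¹ - γ * Λ * γᵀ)⁻¹ * γ := by
  set A : Matrix (Fin N) (Fin N) ℂ := G⁻¹ - γ * Λ * γᵀ with hAdef
  have hGA : G * A = 1 - G * γ * (Λ * γᵀ) := by
    rw [hAdef, Matrix.mul_sub, Matrix.mul_nonsing_inv G hG]
    rw [Matrix.mul_assoc, Matrix.mul_assoc]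
  have hsyl : (G * A).det = (1 - (γᵀ * G * γ) * Λ).det := by
    have h1 : (1 - G * γ * (Λ * γᵀ)).det = (1 - (Λ * γᵀ) * (G * γ)).det := by
      have := Matrix.det_one_add_mul_comm (G * γ) (-(Λ * γᵀ))
      simpa [sub_eq_add_neg, Matrix.mul_neg, Matrix.neg_mul] using this
    have h2 : (1 - (γᵀ * G * γ) * Λ).det = (1 - Λ * (γᵀ * G * γ)).det := by
      have := Matrix.det_one_add_mul_comm (γᵀ * G * γ) (-Λ)
      simpa [sub_eq_add_neg, Matrix.mul_neg, Matrix.neg_mul] using this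
    rw [hGA, h1, h2]
    congr 1
    simp only [Matrix.mul_assoc]
  have hunit : IsUnit (1 - (γᵀ * G * γ) * Λ).det := by
    rw [← hsyl, Matrix.det_mul]
    exact hG.mul hA
  refine ⟨hunit, ?_⟩
  have hkey : (1 - (γᵀ * G * γ) * Λ) * (γᵀ * A⁻¹ * γ) = γᵀ * G * γ := by
    have hAA : A * A⁻¹ = 1 := Matrix.mul_nonsing_inv A hA
    calc (1 - (γᵀ * G * γ) * Λ) * (γᵀ * A⁻¹ * γ)
        = γᵀ * ((1 - G * γ * (Λ * γᵀ)) * A⁻¹) * γ := by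
          simp only [Matrix.sub_mul, Matrix.mul_sub, Matrix.one_mul, Matrix.mul_assoc]
      _ = γᵀ * (G * (A * A⁻¹)) * γ := by
          rw [← hGA]; simp only [Matrix.mul_assoc]
      _ = γᵀ * G * γ := by rw [hAA, Matrix.mul_one, Matrix.mul_assoc]
  calc (1 - (γᵀ * G * γ) * Λ)⁻¹ * (γᵀ * G * γ)
      = (1 - (γᵀ * G * γ) * Λ)⁻¹ * ((1 - (γᵀ * G * γ) * Λ) * (γᵀ * A⁻¹ * γ)) := by rw [hkey]
    _ = γᵀ * A⁻¹ * γ := by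
        rw [← Matrix.mul_assoc, Matrix.nonsing_inv_mul _ hunit, Matrix.one_mul]
end
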